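/- arXiv:2206.10557 — 3 statements merged into one kernel-verified Lean document; each statement's English description precedes it below -/
import Mathlib

section
/- Let G be a graph and let χ be a 2-stable pair coloring of G. Let v₁, w₁, v₂, w₂ ∈ V(G) with χ(v₁,w₁) = χ(v₂,w₂), and let D ⊆ C_V(G,χ) be a set of vertex colors. If there is a path from v₁ to w₁ in G that avoids D, then there is a path from v₂ to w₂ in G that avoids D. -/
namespace WL

open SimpleGraph

/-! ### Iterated colorings of the 2-dimensional Weisfeiler--Leman algorithm

`WLColor C n` is the domain of colors after `n` refinement rounds of 2-WL, where the
input graph carries an arc/pair coloring with values in `C`.  The initial color of a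
pair records its ordered isomorphism type (equality pattern, adjacency in both
directions) together with its input color. -/

def WLColor (C : Type) : ℕ → Type :=
  fun n => Nat.rec (Prop × Prop × Prop × C) (fun _ ih => ih × Multiset (ih × ih)) n

/-- The coloring of ordered pairs computed by 2-WL after `n` rounds on the (directed)
graph with adjacency relation `A` and input pair coloring `κ`. -/
def wlRound {V C : Type} [Fintype V] (A : V → V → Prop) (κ : V → V → C) :
    (n : ℕ) → V × V → WLColor C n
  | 0 => fun p => (p.1 = p.2, A p.1 p.2, A p.2 p.1, κ p.1 p.2)
  | n + 1 => fun p =>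
      (wlRound A κ n p,
        Finset.univ.val.map fun u => (wlRound A κ n (u, p.2), wlRound A κ n (p.1, u)))

/-- Equality of the stable 2-WL colors of a pair `p` of the arc/pair-colored graph
`(A, κ)` and a pair `q` of the arc/pair-colored graph `(B, κ')` (the stable colors
agree iff the colors agree after every finite number of rounds). -/
def wl2EqC {V W C : Type} [Fintype V] [Fintype W]
    (A : V → V → Prop) (κ : V → V → C) (B : W → W → Prop) (κ' : W → W → C)
    (p : V × V) (q : W × W) : Prop :=
  ∀ n, wlRound A κ n p = wlRound B κ' n q

/-- Equality of stable 2-WL colors across two (uncolored) graphs. -/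
def wl2Eq {V W : Type} [Fintype V] [Fintype W] (A : V → V → Prop) (B : W → W → Prop)
    (p : V × V) (q : W × W) : Prop :=
  wl2EqC A (fun _ _ => ()) B (fun _ _ => ()) p q

/-- `wl2 A p q`: the pairs `p` and `q` receive the same color in the stable coloring
`WL²` computed by 2-WL on the graph with adjacency relation `A`. -/
def wl2 {V : Type} [Fintype V] (A : V → V → Prop) (p q : V × V) : Prop :=
  wl2Eq A A p q

/-- Having the same stable 2-WL color is an equivalence relation on pairs. -/
def wl2Setoid {V : Type} [Fintype V] (A : V → V → Prop) : Setoid (V × V) :=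
  ⟨wl2 A, ⟨fun _ _ => rfl, fun h n => (h n).symm, fun h₁ h₂ n => (h₁ n).trans (h₂ n)⟩⟩

/-! ### Color refinement (1-WL) on pair-colored graphs, and the set `Disc` -/

def WL1Color (C : Type) : ℕ → Type :=
  fun n => Nat.rec (List Prop) (fun _ ih => ih × Multiset (ih × C × C)) n

/-- The vertex coloring computed by 1-WL (color refinement) after `n` rounds, on the
complete graph whose pairs are colored by `κ`, where the vertices in the list `vs`
are individualized. -/
def wl1Round {V C : Type} [Fintype V] (κ : V → V → C) (vs : List V) :
    (n : ℕ) → V → WL1Color C n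
  | 0 => fun v => vs.map fun x => (x = v : Prop)
  | n + 1 => fun v =>
      (wl1Round κ vs n v,
        Finset.univ.val.map fun w => (wl1Round κ vs n w, κ v w, κ w v))

/-- `discSet A vs = Disc_G(vs)`: the set of vertices lying in singleton color classes
of the stable coloring computed by 1-WL on the graph with adjacency relation `A`,
where every pair of vertices is initially colored by its `WL²` color and the
vertices of `vs` are individualized. -/
def discSet {V : Type} [Fintype V] (A : V → V → Prop) (vs : List V) : Set V :=
  {v | ∀ w,
    (∀ n, wl1Round (fun x y => Quotient.mk (wl2Setoid A) (x, y)) vs n w =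
          wl1Round (fun x y => Quotient.mk (wl2Setoid A) (x, y)) vs n v) → w = v}

/-! ### The k-dimensional Weisfeiler--Leman algorithm -/

def WLkColor (k : ℕ) : ℕ → Type :=
  fun n => Nat.rec (Fin k → Fin k → Prop × Prop) (fun _ ih => ih × Multiset (Fin k → ih)) n

/-- The coloring of `k`-tuples computed by `k`-WL after `n` rounds on the graph with
adjacency relation `A`. -/
def wlkRound {V : Type} [Fintype V] (A : V → V → Prop) (k : ℕ) :
    (n : ℕ) → (Fin k → V) → WLkColor k n
  | 0 => fun t i j => (t i = t j, A (t i) (t j))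
  | n + 1 => fun t =>
      (wlkRound A k n t,
        Finset.univ.val.map fun w => fun i => wlkRound A k n (Function.update t i w))

/-! ### Minors, planarity, connectivity -/

/-- `H` is a minor of `G`, via disjoint nonempty connected branch sets. -/
def IsMinor {V W : Type} (G : SimpleGraph V) (H : SimpleGraph W) : Prop :=
  ∃ f : W → Set V,
    (∀ w, (f w).Nonempty) ∧
    (∀ w, (G.induce (f w)).Preconnected) ∧
    (∀ w₁ w₂, w₁ ≠ w₂ → Disjoint (f w₁) (f w₂)) ∧
    (∀ w₁ w₂, H.Adj w₁ w₂ → ∃ v₁ ∈ f w₁, ∃ v₂ ∈ f w₂, G.Adj v₁ v₂)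

/-- Planarity, via Wagner's theorem: neither `K₅` nor `K₃,₃` is a minor. -/
def IsPlanar {V : Type} (G : SimpleGraph V) : Prop :=
  ¬ IsMinor G (completeGraph (Fin 5)) ∧
  ¬ IsMinor G (completeBipartiteGraph (Fin 3) (Fin 3))

/-- `S` is a separator of `G`: deleting `S` increases the number of connected
components. -/
def IsSeparator {V : Type} (G : SimpleGraph V) (S : Set V) : Prop :=
  Nat.card G.ConnectedComponent < Nat.card (G.induce Sᶜ).ConnectedComponent

/-- `G` is 3-connected: it is connected and has no separator of size at most 2. -/
def ThreeConnected {V : Type} (G : SimpleGraph V) : Prop :=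
  G.Connected ∧ ∀ S : Set V, S.ncard ≤ 2 → ¬ IsSeparator G S

/-! ### Subgraphs induced by WL² edge colors; types of edge colors

An edge color of `WL²(G)` is represented by a pair `c : V × V` with `G.Adj c.1 c.2`;
the color itself is the `wl2`-equivalence class of `c`. -/

/-- `c` (i.e. the `WL²`-class of `c`) is an edge color of `G`. -/
def EdgeColor {V : Type} (G : SimpleGraph V) (c : V × V) : Prop := G.Adj c.1 c.2

/-- The graph `G[c]` (on the full vertex set): edges are pairs of one of whose
orientations has `WL²`-color `c`. -/
def colorGraph {V : Type} [Fintype V] (G : SimpleGraph V) (c : V × V) : SimpleGraph V :=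
  SimpleGraph.fromRel fun v w => G.Adj v w ∧ wl2 G.Adj (v, w) c

/-- The graph `G[{c,d}]` (on the full vertex set). -/
def colorGraph2 {V : Type} [Fintype V] (G : SimpleGraph V) (c d : V × V) : SimpleGraph V :=
  SimpleGraph.fromRel fun v w => G.Adj v w ∧ (wl2 G.Adj (v, w) c ∨ wl2 G.Adj (v, w) d)

/-- A graph restricted to its support (the set of non-isolated vertices); used to
realize color subgraphs `G[C]` whose vertex set is the set of endpoints of their
edges. -/
def onSupport {V : Type} (H : SimpleGraph V) : SimpleGraph ↥H.support :=
  H.induce H.support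

def colorGraphOn {V : Type} [Fintype V] (G : SimpleGraph V) (c : V × V) :
    SimpleGraph ↥(colorGraph G c).support :=
  onSupport (colorGraph G c)

def colorGraph2On {V : Type} [Fintype V] (G : SimpleGraph V) (c d : V × V) :
    SimpleGraph ↥(colorGraph2 G c d).support :=
  onSupport (colorGraph2 G c d)

/-- The vertex set of the connected component of `H` containing `v`. -/
def compVerts {V : Type} (H : SimpleGraph V) (v : V) : Set V := {w | H.Reachable v w}

/-- The edge set of the connected component of `H` containing `v`. -/
def compEdges {V : Type} (H : SimpleGraph V) (v : V) : Set (Sym2 V) :=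
  {e | e ∈ H.edgeSet ∧ ∀ x ∈ e, H.Reachable v x}

/-- Type I: every connected component is a tree (one face). -/
def TypeI {V : Type} (H : SimpleGraph V) : Prop :=
  ∀ v ∈ H.support, (compEdges H v).ncard + 1 = (compVerts H v).ncard

/-- Type II: every connected component has exactly as many edges as vertices,
i.e. is a cycle (two faces). -/
def TypeII {V : Type} (H : SimpleGraph V) : Prop :=
  ∀ v ∈ H.support, (compEdges H v).ncard = (compVerts H v).ncard

/-- Type III: every connected component has more edges than vertices
(at least three faces). -/
def TypeIII {V : Type} (H : SimpleGraph V) : Prop :=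
  ∀ v ∈ H.support, (compVerts H v).ncard < (compEdges H v).ncard

/-- `G[c]` is unicolored: all its vertices get the same `WL²` vertex color. -/
def Unicolored {V : Type} [Fintype V] (G : SimpleGraph V) (c : V × V) : Prop :=
  ∀ v ∈ (colorGraph G c).support, ∀ w ∈ (colorGraph G c).support, wl2 G.Adj (v, v) (w, w)

/-- `G[c]` is bicolored: exactly two `WL²` vertex colors occur on it. -/
def Bicolored {V : Type} [Fintype V] (G : SimpleGraph V) (c : V × V) : Prop :=
  (∃ v ∈ (colorGraph G c).support, ∃ w ∈ (colorGraph G c).support,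
      ¬ wl2 G.Adj (v, v) (w, w)) ∧
  (∀ x ∈ (colorGraph G c).support, ∀ y ∈ (colorGraph G c).support,
      ∀ z ∈ (colorGraph G c).support,
      wl2 G.Adj (x, x) (y, y) ∨ wl2 G.Adj (x, x) (z, z) ∨ wl2 G.Adj (y, y) (z, z))

/-- Type IIc: `c` has Type II, `G[c]` is unicolored, and the relation
`χ(v,w) = c` is not symmetric (the components of `G[c]` are directed cycles). -/
def HasTypeIIc {V : Type} [Fintype V] (G : SimpleGraph V) (c : V × V) : Prop :=
  TypeII (colorGraph G c) ∧ Unicolored G c ∧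
    ∃ v w : V, wl2 G.Adj (v, w) c ∧ ¬ wl2 G.Adj (w, v) c

/-- Type IIa: `c` has Type II but not Type IIc, and `G[c]` is disconnected. -/
def HasTypeIIa {V : Type} [Fintype V] (G : SimpleGraph V) (c : V × V) : Prop :=
  TypeII (colorGraph G c) ∧ ¬ HasTypeIIc G c ∧ ¬ (colorGraphOn G c).Connected

/-- The graph `G` has Type IIa: some edge color has Type IIa and every edge color
has Type I or Type IIa. -/
def GraphTypeIIa {V : Type} [Fintype V] (G : SimpleGraph V) : Prop :=
  (∃ c : V × V, EdgeColor G c ∧ HasTypeIIa G c) ∧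
  (∀ c : V × V, EdgeColor G c → (TypeI (colorGraph G c) ∨ HasTypeIIa G c))

/-- The edge color `c` defines a matching. -/
def DefinesMatching {V : Type} [Fintype V] (G : SimpleGraph V) (c : V × V) : Prop :=
  ∀ v w : V, wl2 G.Adj (v, w) c →
    (¬ wl2 G.Adj (v, v) (w, w)) ∧
    (∀ v', wl2 G.Adj (v', w) c → v' = v) ∧
    (∀ w', wl2 G.Adj (v, w') c → w' = w)

/-- `x` and `y` are joined by an edge of color `d` or of the reverse color `d⁻¹`. -/
def dAdj {V : Type} [Fintype V] (G : SimpleGraph V) (d : V × V) (x y : V) : Prop :=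
  wl2 G.Adj (x, y) d ∨ wl2 G.Adj (y, x) d

/-- The edge color `c` admits short `d`-connections: two vertices in distinct
connected components of `G[c]` are joined by a path of length at most 2 all of
whose edges have color `d` or `d⁻¹`. -/
def AdmitsShortConnections {V : Type} [Fintype V] (G : SimpleGraph V) (c d : V × V) : Prop :=
  ∃ v₁ ∈ (colorGraph G c).support, ∃ v₂ ∈ (colorGraph G c).support,
    ¬ (colorGraph G c).Reachable v₁ v₂ ∧
    (dAdj G d v₁ v₂ ∨ ∃ u, dAdj G d v₁ u ∧ dAdj G d u v₂)

/-! ### Orbit determination -/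

/-- 2-WL determines pair orbits of `G`. -/
def DeterminesPairOrbits {V : Type} [Fintype V] (G : SimpleGraph V) : Prop :=
  ∀ v₁ v₂ : V, ∀ (W : Type) [Fintype W] (H : SimpleGraph W), ∀ w₁ w₂ : W,
    wl2Eq G.Adj H.Adj (v₁, v₂) (w₁, w₂) → ∃ φ : G ≃g H, φ v₁ = w₁ ∧ φ v₂ = w₂

/-- 2-WL determines arc orbits of `G`. -/
def DeterminesArcOrbits {V : Type} [Fintype V] (G : SimpleGraph V) : Prop :=
  ∀ v₁ v₂ : V, (v₁ = v₂ ∨ G.Adj v₁ v₂) →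
    ∀ (W : Type) [Fintype W] (H : SimpleGraph W), ∀ w₁ w₂ : W, (w₁ = w₂ ∨ H.Adj w₁ w₂) →
    wl2Eq G.Adj H.Adj (v₁, v₂) (w₁, w₂) → ∃ φ : G ≃g H, φ v₁ = w₁ ∧ φ v₂ = w₂

/-- An isomorphism from the directed graph `A` onto the (symmetric) adjacency
relation of the simple graph `H`. -/
def DigraphIsoTo {V W : Type} (A : V → V → Prop) (H : SimpleGraph W) : Prop :=
  ∃ e : V ≃ W, ∀ v w, A v w ↔ H.Adj (e v) (e w)

/-- 2-WL determines arc orbits of the directed graph `A`. -/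
def DigraphDeterminesArcOrbits {V : Type} [Fintype V] (A : V → V → Prop) : Prop :=
  ∀ v₁ v₂ : V, (v₁ = v₂ ∨ A v₁ v₂ ∨ A v₂ v₁) →
    ∀ (W : Type) [Fintype W] (B : W → W → Prop), (∀ w, ¬ B w w) →
    ∀ w₁ w₂ : W, (w₁ = w₂ ∨ B w₁ w₂ ∨ B w₂ w₁) →
    wl2Eq A B (v₁, v₂) (w₁, w₂) →
    ∃ e : V ≃ W, (∀ x y, A x y ↔ B (e x) (e y)) ∧ e v₁ = w₁ ∧ e v₂ = w₂

/-! ### 2-stable colorings -/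

/-- A pair coloring `χ` is 2-stable w.r.t. `G`: it refines `WL²(G)` and is not
strictly refined by one round of 2-WL. -/
def IsTwoStable {V C : Type} [Fintype V] (G : SimpleGraph V) (χ : V × V → C) : Prop :=
  (∀ p q : V × V, χ p = χ q → wl2 G.Adj p q) ∧
  (∀ p q : V × V, χ p = χ q →
    (Finset.univ.val.map fun u => (χ (u, p.2), χ (p.1, u))) =
    (Finset.univ.val.map fun u => (χ (u, q.2), χ (q.1, u))))

/-- `G[Cs]` for a pair coloring `χ` and a set of colors `Cs` (on the full vertex
set). -/
def chiColorGraph {V C : Type} (G : SimpleGraph V) (χ : V × V → C) (Cs : Set C) :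
    SimpleGraph V :=
  SimpleGraph.fromRel fun v w => G.Adj v w ∧ χ (v, w) ∈ Cs

/-! ### Components avoiding a set, neighborhoods of sets -/

/-- The vertex set of the connected component of `z` in `G - A`. -/
def componentWithin {V : Type} (G : SimpleGraph V) (A : Set V) (z : V) : Set V :=
  {y | ∃ p : G.Walk z y, ∀ u ∈ p.support, u ∉ A}

/-- `N_G(Z)`: the set of vertices outside `Z` having a neighbor in `Z`. -/
def outerNeighborhood {V : Type} (G : SimpleGraph V) (Z : Set V) : Set V :=
  {v | v ∉ Z ∧ ∃ u ∈ Z, G.Adj u v}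


/-! ### Polyhedral graphs -/

/-- The tetrahedron graph `K₄`. -/
def tetrahedronGraph : SimpleGraph (Fin 4) := completeGraph (Fin 4)

/-- The cube graph `Q₃`. -/
def cubeGraph : SimpleGraph (Fin 3 → Bool) :=
  SimpleGraph.fromRel fun x y => ∃ i, x i ≠ y i ∧ ∀ j, j ≠ i → x j = y j

/-- The octahedron graph `K₂,₂,₂`. -/
def octahedronGraph : SimpleGraph (Fin 3 × Fin 2) :=
  SimpleGraph.fromRel fun p q => p.1 ≠ q.1

/-- The dodecahedron graph, realized as the generalized Petersen graph GP(10,2). -/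
def dodecahedronGraph : SimpleGraph (Bool × Fin 10) :=
  SimpleGraph.fromRel fun p q =>
    (p.1 = false ∧ q.1 = false ∧ q.2 = p.2 + 1) ∨
    (p.1 = true ∧ q.1 = true ∧ q.2 = p.2 + 2) ∨
    (p.1 ≠ q.1 ∧ p.2 = q.2)

/-- The icosahedron graph, realized as a pentagonal antiprism (the circulant
`Ci₁₀(1,2)`) capped by two apexes. -/
def icosahedronGraph : SimpleGraph (Fin 10 ⊕ Bool) :=
  SimpleGraph.fromRel fun p q =>
    (∃ i j : Fin 10, p = Sum.inl i ∧ q = Sum.inl j ∧ (j = i + 1 ∨ j = i + 2)) ∨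
    (∃ (i : Fin 10) (b : Bool), p = Sum.inl i ∧ q = Sum.inr b ∧ (i.val % 2 = 0 ↔ b = false))

/-- The cuboctahedron graph, realized as the line graph (= medial graph) of the cube. -/
def cuboctahedronGraph : SimpleGraph ↥cubeGraph.edgeSet :=
  SimpleGraph.fromRel fun e f =>
    ∃ v : Fin 3 → Bool, v ∈ (e : Sym2 (Fin 3 → Bool)) ∧ v ∈ (f : Sym2 (Fin 3 → Bool))

/-- The icosidodecahedron graph, realized as the medial graph of the icosahedron. -/
def icosidodecahedronGraph : SimpleGraph ↥icosahedronGraph.edgeSet :=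
  SimpleGraph.fromRel fun e f =>
    ∃ v a b : Fin 10 ⊕ Bool, (e : Sym2 (Fin 10 ⊕ Bool)) = s(v, a) ∧
      (f : Sym2 (Fin 10 ⊕ Bool)) = s(v, b) ∧ icosahedronGraph.Adj a b

/-- The rhombic dodecahedron graph, realized as the vertex-face incidence graph of
the cube (faces of the cube are indexed by `Fin 3 × Bool`). -/
def rhombicDodecahedronGraph : SimpleGraph ((Fin 3 → Bool) ⊕ (Fin 3 × Bool)) :=
  SimpleGraph.fromRel fun p q =>
    ∃ (x : Fin 3 → Bool) (i : Fin 3) (b : Bool), p = Sum.inl x ∧ q = Sum.inr (i, b) ∧ x i = b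

/-- The (triangular) faces of the icosahedron are exactly its 3-cliques. -/
def IcosaFace : Type := {s : Finset (Fin 10 ⊕ Bool) // icosahedronGraph.IsNClique 3 s}

/-- The rhombic triacontahedron graph, realized as the vertex-face incidence graph
of the icosahedron. -/
def rhombicTriacontahedronGraph : SimpleGraph ((Fin 10 ⊕ Bool) ⊕ IcosaFace) :=
  SimpleGraph.fromRel fun p q =>
    ∃ (v : Fin 10 ⊕ Bool) (t : IcosaFace), p = Sum.inl v ∧ q = Sum.inr t ∧ v ∈ t.val

/-! ### Truncating a set of vertices of a (plane) graph -/

/-- Vertex set after truncating the vertices of `W` in `H`: the untouched old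
vertices together with one vertex for every arc emanating from a vertex of `W`. -/
def truncVertexType {V : Type} (H : SimpleGraph V) (W : Set V) : Type :=
  {v : V // v ∉ W} ⊕ {p : V × V // p.1 ∈ W ∧ H.Adj p.1 p.2}

/-- Adjacency after truncating `W` in `H`.  `ringRel v w w'` tells whether the
neighbors `w, w'` of the truncated vertex `v` are consecutive in the cyclic order
around `v` in the plane embedding (for a degree-3 vertex any two are). -/
def truncAdj {V : Type} (H : SimpleGraph V) (W : Set V) (ringRel : V → V → V → Prop) :
    truncVertexType H W → truncVertexType H W → Prop
  | Sum.inl u, Sum.inl u' => H.Adj u.val u'.val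
  | Sum.inl u, Sum.inr p => p.val.2 = u.val
  | Sum.inr p, Sum.inr q =>
      (p.val.1 = q.val.1 ∧ ringRel p.val.1 p.val.2 q.val.2) ∨
      (p.val.2 = q.val.1 ∧ q.val.2 = p.val.1)
  | _, _ => False

/-- The graph obtained from `H` by truncating every vertex of `W`. -/
def truncateGraph {V : Type} (H : SimpleGraph V) (W : Set V) (ringRel : V → V → V → Prop) :
    SimpleGraph (truncVertexType H W) :=
  SimpleGraph.fromRel (truncAdj H W ringRel)

/-- Ring relation for truncating vertices of degree 3 (all pairs consecutive). -/
def triangleRing {V : Type} : V → V → V → Prop := fun _ _ _ => True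

/-- Ring relation when the link of each truncated vertex is an induced cycle
(e.g. in a triangulation): consecutive means adjacent. -/
def linkRing {V : Type} (H : SimpleGraph V) : V → V → V → Prop := fun _ w w' => H.Adj w w'

/-- Ring relation when any two consecutive neighbors of `v` lie on a common
quadrilateral face: consecutive means having a common neighbor besides `v`. -/
def squareRing {V : Type} (H : SimpleGraph V) : V → V → V → Prop :=
  fun v w w' => ∃ u, u ≠ v ∧ H.Adj w u ∧ H.Adj w' u

def truncatedTetrahedronGraph := truncateGraph tetrahedronGraph Set.univ triangleRing
def truncatedCubeGraph := truncateGraph cubeGraph Set.univ triangleRing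
def truncatedOctahedronGraph := truncateGraph octahedronGraph Set.univ (linkRing octahedronGraph)
def truncatedDodecahedronGraph := truncateGraph dodecahedronGraph Set.univ triangleRing
def truncatedIcosahedronGraph := truncateGraph icosahedronGraph Set.univ (linkRing icosahedronGraph)

/-- The chamfered tetrahedron: truncate one bipartition class of the cube. -/
def chamferedTetrahedronGraph :=
  truncateGraph cubeGraph {x : Fin 3 → Bool | (x 0 ^^ (x 1 ^^ x 2)) = true} triangleRing

/-- The chamfered cube: truncate the degree-4 vertices of the rhombic dodecahedron. -/
def chamferedCubeGraph :=
  truncateGraph rhombicDodecahedronGraph {p | ∃ f, p = Sum.inr f}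
    (squareRing rhombicDodecahedronGraph)

/-- The chamfered octahedron: truncate the degree-3 vertices of the rhombic
dodecahedron. -/
def chamferedOctahedronGraph :=
  truncateGraph rhombicDodecahedronGraph {p | ∃ x, p = Sum.inl x} triangleRing

/-- The chamfered dodecahedron: truncate the degree-5 vertices of the rhombic
triacontahedron. -/
def chamferedDodecahedronGraph :=
  truncateGraph rhombicTriacontahedronGraph {p | ∃ v, p = Sum.inl v}
    (squareRing rhombicTriacontahedronGraph)

/-- The chamfered icosahedron: truncate the degree-3 vertices of the rhombic
triacontahedron. -/
def chamferedIcosahedronGraph :=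
  truncateGraph rhombicTriacontahedronGraph {p | ∃ t, p = Sum.inr t} triangleRing

/-- The rhombicuboctahedron, realized as the expansion (cantellation) of the cube:
vertices are the vertex-face flags of the cube. -/
def rhombicuboctahedronGraph :
    SimpleGraph {p : (Fin 3 → Bool) × (Fin 3 × Bool) // p.1 p.2.1 = p.2.2} :=
  SimpleGraph.fromRel fun a b =>
    (a.val.1 = b.val.1 ∧ a.val.2 ≠ b.val.2) ∨
    (a.val.2 = b.val.2 ∧ cubeGraph.Adj a.val.1 b.val.1)

/-- A pentagon of `H`: a 5-element vertex set inducing a 5-cycle. -/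
def IsPentagon {V : Type} (H : SimpleGraph V) (s : Finset V) : Prop :=
  s.card = 5 ∧ ∀ v ∈ s, ((s : Set V) ∩ H.neighborSet v).ncard = 2

/-- The rhombicosidodecahedron, realized as the expansion (cantellation) of the
dodecahedron: vertices are the vertex-face flags of the dodecahedron (its faces
are exactly its pentagons). -/
def rhombicosidodecahedronGraph :
    SimpleGraph {p : (Bool × Fin 10) × Finset (Bool × Fin 10) //
      IsPentagon dodecahedronGraph p.2 ∧ p.1 ∈ p.2} :=
  SimpleGraph.fromRel fun a b =>
    (a.val.1 = b.val.1 ∧ a.val.2 ≠ b.val.2) ∨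
    (a.val.2 = b.val.2 ∧ dodecahedronGraph.Adj a.val.1 b.val.1)

/-! ### Subdivisions -/

/-- Vertex set of the `f`-subdivision of `H`: old vertices plus `f e` subdivision
vertices for every edge `e`. -/
def subdivVertexType {V : Type} (H : SimpleGraph V) (f : Sym2 V → ℕ) : Type :=
  V ⊕ {x : Sym2 V × ℕ // x.1 ∈ H.edgeSet ∧ x.2 < f x.1}

def subdivAdj {V : Type} (H : SimpleGraph V) (f : Sym2 V → ℕ) :
    subdivVertexType H f → subdivVertexType H f → Prop
  | Sum.inl u, Sum.inl v => H.Adj u v ∧ f s(u, v) = 0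
  | Sum.inl u, Sum.inr x => u ∈ x.val.1
  | _, _ => False

/-- The `f`-subdivision of `H`: each edge `e` is replaced by `f e` parallel paths
of length 2 (edges with `f e = 0` are kept). -/
def parallelSubdivision {V : Type} (H : SimpleGraph V) (f : Sym2 V → ℕ) :
    SimpleGraph (subdivVertexType H f) :=
  SimpleGraph.fromRel (subdivAdj H f)

/-- `G` is (isomorphic to) a parallel subdivision of `H`. -/
def IsParallelSubdivisionOf {α V : Type} (G : SimpleGraph α) (H : SimpleGraph V) : Prop :=
  ∃ f : Sym2 V → ℕ, Nonempty (G ≃g parallelSubdivision H f)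

/-- The `s`-subdivision of `H`: every edge is replaced by `s` parallel paths of
length 2. -/
def sSubdivision {V : Type} (H : SimpleGraph V) (s : ℕ) :
    SimpleGraph (subdivVertexType H (fun _ => s)) :=
  parallelSubdivision H (fun _ => s)

/-- Vertex set of the `C₄`-subdivision of `H`: old vertices, plus two vertices for
each arc of `H`. -/
def c4VertexType {V : Type} (H : SimpleGraph V) : Type :=
  V ⊕ ({p : V × V // H.Adj p.1 p.2} × Bool)

def c4Adj {V : Type} (H : SimpleGraph V) : c4VertexType H → c4VertexType H → Prop
  | Sum.inl v, Sum.inr (a, false) => a.val.1 = v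
  | Sum.inr (a, false), Sum.inr (b, true) => a = b ∨ (a.val.1 = b.val.2 ∧ a.val.2 = b.val.1)
  | _, _ => False

/-- The `C₄`-subdivision of `H`: every edge `vw` is replaced by a 4-cycle attached
to `v` and `w` at opposite vertices. -/
def c4Subdivision {V : Type} (H : SimpleGraph V) : SimpleGraph (c4VertexType H) :=
  SimpleGraph.fromRel (c4Adj H)

/-! ### Cycles, prisms, `C_m^*`, `K_{2,h}^*`, bipyramids -/

/-- The cycle graph on `ZMod m` (for `m ≥ 3`). -/
def cycGraph (m : ℕ) : SimpleGraph (ZMod m) := SimpleGraph.fromRel fun i j => j = i + 1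

/-- The `m`-side prism `C_m □ K₂`. -/
def prismGraph (m : ℕ) : SimpleGraph (ZMod m × Fin 2) :=
  (cycGraph m).boxProd (completeGraph (Fin 2))

/-- The graph `C_m^*`: `m` four-cycles linked in a cyclic fashion. -/
def cmStarGraph (m : ℕ) : SimpleGraph (ZMod m × Fin 4) :=
  SimpleGraph.fromRel fun p q =>
    (p.1 = q.1 ∧ q.2 = p.2 + 1) ∨ (p.2 = 2 ∧ q.2 = 0 ∧ q.1 = p.1 + 1)

/-- The graph `K_{2,h}^*`: `h` disjoint four-cycles, all linked to two extra
vertices at opposite points. -/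
def k2hStarGraph (h : ℕ) : SimpleGraph ((Fin h × Fin 4) ⊕ Bool) :=
  SimpleGraph.fromRel fun x y =>
    (∃ p q : Fin h × Fin 4, x = Sum.inl p ∧ y = Sum.inl q ∧ p.1 = q.1 ∧ q.2 = p.2 + 1) ∨
    (∃ (p : Fin h × Fin 4) (b : Bool), x = Sum.inl p ∧ y = Sum.inr b ∧
      ((b = false ∧ p.2 = 0) ∨ (b = true ∧ p.2 = 2)))

/-- The bipyramid `P*_m`: a cycle of length `m` plus two apexes joined to all of
its vertices. -/
def bipyramidGraph (m : ℕ) : SimpleGraph (ZMod m ⊕ Fin 2) :=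
  SimpleGraph.fromRel fun x y =>
    (∃ i j : ZMod m, x = Sum.inl i ∧ y = Sum.inl j ∧ j = i + 1) ∨
    (∃ (i : ZMod m) (u : Fin 2), x = Sum.inl i ∧ y = Sum.inr u)


/-! ### Contracting the components of `G[c]`, and arc-colored graphs -/

/-- The setoid on `V` whose classes are the connected components of `G[c]`
(and singletons). -/
def contractSetoid {V : Type} [Fintype V] (G : SimpleGraph V) (c : V × V) : Setoid V :=
  (colorGraph G c).reachableSetoid

noncomputable instance contractFintype {V : Type} [Fintype V] (G : SimpleGraph V) (c : V × V) :
    Fintype (Quotient (contractSetoid G c)) :=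
  @Quotient.fintype V _ (contractSetoid G c) fun _ _ => Classical.dec _

/-- The quotient graph `G/c` obtained by contracting every connected component of
`G[c]` to a single vertex. -/
def contractGraph {V : Type} [Fintype V] (G : SimpleGraph V) (c : V × V) :
    SimpleGraph (Quotient (contractSetoid G c)) :=
  SimpleGraph.fromRel fun X Y =>
    ∃ v w : V, Quotient.mk (contractSetoid G c) v = X ∧
      Quotient.mk (contractSetoid G c) w = Y ∧ G.Adj v w

/- The pair coloring `χ/c` of `G/c`: the multiset of `WL²(G)`-colors of the pairs
joining the two contracted classes. -/
open Classical in
noncomputable def contractColor {V : Type} [Fintype V] (G : SimpleGraph V) (c : V × V) :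
    Quotient (contractSetoid G c) → Quotient (contractSetoid G c) →
      Multiset (Quotient (wl2Setoid G.Adj)) :=
  fun X Y =>
    ((Finset.univ (α := V × V)).val.filter fun p =>
        Quotient.mk (contractSetoid G c) p.1 = X ∧ Quotient.mk (contractSetoid G c) p.2 = Y).map
      (Quotient.mk (wl2Setoid G.Adj))

/- The arc coloring associated with a pair coloring `κ`: arcs keep their color,
non-arcs are uncolored. -/
open Classical in
noncomputable def arcColor {V C : Type} (A : V → V → Prop) (κ : V → V → C) :
    V → V → Option C :=
  fun x y => if x = y ∨ A x y then some (κ x y) else none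

/-- 2-WL determines arc orbits of the arc-colored graph `(G, κ)`. -/
def CDeterminesArcOrbits {V C : Type} [Fintype V] (G : SimpleGraph V) (κ : V → V → C) : Prop :=
  ∀ v₁ v₂ : V, (v₁ = v₂ ∨ G.Adj v₁ v₂) →
    ∀ (W : Type) [Fintype W] (H : SimpleGraph W) (κ' : W → W → C),
    ∀ w₁ w₂ : W, (w₁ = w₂ ∨ H.Adj w₁ w₂) →
    wl2EqC G.Adj (arcColor G.Adj κ) H.Adj (arcColor H.Adj κ') (v₁, v₂) (w₁, w₂) →
    ∃ e : V ≃ W, (∀ x y, G.Adj x y ↔ H.Adj (e x) (e y)) ∧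
      (∀ x y, x = y ∨ G.Adj x y → κ x y = κ' (e x) (e y)) ∧ e v₁ = w₁ ∧ e v₂ = w₂

/-- 2-WL determines pair orbits of the arc-colored graph `(G, κ)`. -/
def CDeterminesPairOrbits {V C : Type} [Fintype V] (G : SimpleGraph V) (κ : V → V → C) : Prop :=
  ∀ v₁ v₂ : V,
    ∀ (W : Type) [Fintype W] (H : SimpleGraph W) (κ' : W → W → C),
    ∀ w₁ w₂ : W,
    wl2EqC G.Adj (arcColor G.Adj κ) H.Adj (arcColor H.Adj κ') (v₁, v₂) (w₁, w₂) →
    ∃ e : V ≃ W, (∀ x y, G.Adj x y ↔ H.Adj (e x) (e y)) ∧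
      (∀ x y, x = y ∨ G.Adj x y → κ x y = κ' (e x) (e y)) ∧ e v₁ = w₁ ∧ e v₂ = w₂


/-- If `χ` refines `WL²` and `χ (x, u) = χ (y, y)` is a diagonal color, then `x = u`. -/
lemma eq_of_diag_aux {V C : Type} [Fintype V] {G : SimpleGraph V} {χ : V × V → C}
    (hχ : IsTwoStable G χ) {x u y : V} (h : χ (x, u) = χ (y, y)) : x = u := by
  have h0 := hχ.1 (x, u) (y, y) h 0
  have h1 : (x = u : Prop) = (y = y : Prop) := congrArg Prod.fst h0
  exact cast h1.symm rfl

/-- Adjacency is determined by the color. -/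
lemma adj_of_aux {V C : Type} [Fintype V] {G : SimpleGraph V} {χ : V × V → C}
    (hχ : IsTwoStable G χ) {p q : V × V} (h : χ p = χ q) (ha : G.Adj p.1 p.2) :
    G.Adj q.1 q.2 := by
  have h0 := hχ.1 p q h 0
  have h1 : (G.Adj p.1 p.2 : Prop) = (G.Adj q.1 q.2 : Prop) :=
    congrArg (fun z => z.2.1) h0
  exact cast h1 ha

/-- The color of the diagonal at the second coordinate is determined. -/
lemma diag_color_aux {V C : Type} [Fintype V] {G : SimpleGraph V} {χ : V × V → C}
    (hχ : IsTwoStable G χ) {p q : V × V} (h : χ p = χ q) :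
    χ (p.2, p.2) = χ (q.2, q.2) := by
  have hm := hχ.2 p q h
  have hmem : (χ (p.2, p.2), χ (p.1, p.2)) ∈
      (Finset.univ.val.map fun u => (χ (u, q.2), χ (q.1, u))) := by
    rw [← hm]
    exact Multiset.mem_map.2 ⟨p.2, Finset.mem_univ_val _, rfl⟩
  obtain ⟨u, -, hu⟩ := Multiset.mem_map.1 hmem
  have h1 : χ (u, q.2) = χ (p.2, p.2) := congrArg Prod.fst hu
  have hu2 : u = q.2 := eq_of_diag_aux hχ h1
  subst hu2
  exact h1.symm

/-- Transfer of `D`-avoiding walks along color-equal pairs. -/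
lemma walk_transfer_aux {V C : Type} [Fintype V] {G : SimpleGraph V} {χ : V × V → C}
    (hχ : IsTwoStable G χ) (D : Set C) :
    ∀ {v₁ w₁ : V} (p : G.Walk v₁ w₁), p.IsPath →
      ∀ v₂ w₂ : V, χ (v₁, w₁) = χ (v₂, w₂) →
      (∀ u ∈ p.support, u ≠ v₁ → u ≠ w₁ → χ (u, u) ∉ D) →
      ∃ q : G.Walk v₂ w₂, ∀ u ∈ q.support, u ≠ v₂ → u ≠ w₂ → χ (u, u) ∉ D := by
  intro v₁ w₁ p
  induction p with
  | nil =>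
    intro _ v₂ w₂ hcol _
    obtain rfl : v₂ = w₂ := eq_of_diag_aux hχ hcol.symm
    exact ⟨SimpleGraph.Walk.nil, by simp⟩
  | @cons a b w₁ hab p ih =>
    intro hpath v₂ w₂ hcol hav
    rw [SimpleGraph.Walk.cons_isPath_iff] at hpath
    obtain ⟨hp, hanp⟩ := hpath
    -- find the image u₂ of b
    have hm := hχ.2 (a, w₁) (v₂, w₂) hcol
    have hmem : (χ (b, w₁), χ (a, b)) ∈
        (Finset.univ.val.map fun u => (χ (u, w₂), χ (v₂, u))) := by
      rw [← hm]
      exact Multiset.mem_map.2 ⟨b, Finset.mem_univ_val _, rfl⟩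
    obtain ⟨u₂, -, hu₂⟩ := Multiset.mem_map.1 hmem
    have h1 : χ (u₂, w₂) = χ (b, w₁) := congrArg Prod.fst hu₂
    have h2 : χ (v₂, u₂) = χ (a, b) := congrArg Prod.snd hu₂
    have hadj2 : G.Adj v₂ u₂ := adj_of_aux hχ h2.symm hab
    -- IH applied to the tail
    have hav' : ∀ u ∈ p.support, u ≠ b → u ≠ w₁ → χ (u, u) ∉ D := by
      intro u hu hub huw
      have hua : u ≠ a := fun e => hanp (e ▸ hu)
      exact hav u (by simp [hu]) hua huw
    obtain ⟨q, hq⟩ := ih hp u₂ w₂ h1.symm hav'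
    refine ⟨SimpleGraph.Walk.cons hadj2 q, ?_⟩
    intro u hu huv huw
    rw [SimpleGraph.Walk.support_cons, List.mem_cons] at hu
    rcases hu with rfl | hu
    · exact absurd rfl huv
    rcases eq_or_ne u u₂ with rfl | hne
    · -- need χ (u₂, u₂) ∉ D, via χ (u₂,u₂) = χ (b,b)
      have hbb : χ (b, b) = χ (u, u) := diag_color_aux hχ h2.symm
      have hba : b ≠ a := fun e => (G.irrefl (e ▸ hab)).elim
      have hbw : b ≠ w₁ := by
        intro e
        subst e
        exact huw (eq_of_diag_aux hχ h1)
      have := hav b (by simp) hba hbw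
      rwa [hbb] at this
    · exact hq u hu hne huw

/-- Let `χ` be a 2-stable pair coloring of a graph `G`, let
`χ(v₁,w₁) = χ(v₂,w₂)` and let `D` be a set of vertex colors.  If there is a path
from `v₁` to `w₁` avoiding `D`, then there is a path from `v₂` to `w₂`
avoiding `D`. -/
theorem statement_7 {V C : Type} [Fintype V] (G : SimpleGraph V) (χ : V × V → C)
    (hχ : IsTwoStable G χ) (v₁ w₁ v₂ w₂ : V)
    (hcol : χ (v₁, w₁) = χ (v₂, w₂))
    (D : Set C) (hD : D ⊆ Set.range fun v : V => χ (v, v))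
    (hpath : ∃ p : G.Walk v₁ w₁, p.IsPath ∧
      ∀ u ∈ p.support, u ≠ v₁ → u ≠ w₁ → χ (u, u) ∉ D) :
    ∃ p : G.Walk v₂ w₂, p.IsPath ∧
      ∀ u ∈ p.support, u ≠ v₂ → u ≠ w₂ → χ (u, u) ∉ D := by
  classical
  obtain ⟨p, hp, hav⟩ := hpath
  obtain ⟨q, hq⟩ := walk_transfer_aux hχ D p hp v₂ w₂ hcol hav
  refine ⟨q.toPath, q.toPath.2, fun u hu => hq u (q.support_toPath_subset hu)⟩

end WL
end

section
/- Let G be a graph and let v₁, …, v_ℓ ∈ V(G) be vertices such that Disc_G(v₁,…,v_ℓ) = V(G). Set k = max(2, ℓ+1). Then k-WL determines pair orbits of G. -/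
namespace WL

open SimpleGraph

open Function

section Basic

variable {V W : Type} [Fintype V] [Fintype W]

lemma exists_equiv_of_map_univ_eq {X : Type} (F : V → X) (Gf : W → X)
    (h : Multiset.map F Finset.univ.val = Multiset.map Gf Finset.univ.val) :
    ∃ e : V ≃ W, ∀ v, F v = Gf (e v) := by
  classical
  have hcard : ∀ x : X, Fintype.card {v : V // F v = x} = Fintype.card {w : W // Gf w = x} := by
    intro x
    have h2 := congrArg (Multiset.count x) h
    rw [Multiset.count_map, Multiset.count_map] at h2
    rw [Fintype.card_subtype, Fintype.card_subtype, Finset.card_def, Finset.card_def,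
      Finset.filter_val, Finset.filter_val]
    have e1 : Multiset.filter (fun v => F v = x) Finset.univ.val
        = Multiset.filter (fun a => x = F a) Finset.univ.val :=
      Multiset.filter_congr (fun a _ => eq_comm)
    have e2 : Multiset.filter (fun w => Gf w = x) Finset.univ.val
        = Multiset.filter (fun a => x = Gf a) Finset.univ.val :=
      Multiset.filter_congr (fun a _ => eq_comm)
    rw [e1, e2, h2]
  refine ⟨Equiv.ofFiberEquiv (fun x => Fintype.equivOfCardEq (hcard x)), fun v => ?_⟩
  exact (Equiv.ofFiberEquiv_map _ v).symm

lemma forall_of_forall_exists {E : Type} [Finite E] {p : E → ℕ → Prop}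
    (anti : ∀ e n, p e (n + 1) → p e n) (h : ∀ n, ∃ e, p e n) : ∃ e, ∀ n, p e n := by
  classical
  have antile : ∀ e a b, a ≤ b → p e b → p e a := by
    intro e a b hab hp
    obtain ⟨d, rfl⟩ := Nat.exists_eq_add_of_le hab
    induction d with
    | zero => simpa using hp
    | succ d ih => exact ih (Nat.le_add_right _ _) (anti e _ (by rwa [← Nat.add_assoc] at hp))
  choose f hf using h
  obtain ⟨e, he⟩ := Finite.exists_infinite_fiber f
  rw [Set.infinite_coe_iff] at he
  refine ⟨e, fun n => ?_⟩
  obtain ⟨m, hm, hnm⟩ := he.exists_gt n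
  have hm' : f m = e := hm
  exact antile e n m (le_of_lt hnm) (hm' ▸ hf m)

lemma map_univ_equiv_comp {X : Type} (e : V ≃ W) (f : W → X) :
    Multiset.map (fun v => f (e v)) Finset.univ.val = Multiset.map f Finset.univ.val := by
  conv_rhs => rw [← Finset.map_univ_equiv e]
  rw [Finset.map_val, Multiset.map_map]
  rfl

end Basic

open Function

section WLk

variable {V W : Type} [Fintype V] [Fintype W]

/-- Cross-graph equality of `k`-WL colors at every round. -/
def Rinf (A : V → V → Prop) (B : W → W → Prop) (k : ℕ) (t : Fin k → V) (s : Fin k → W) : Prop :=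
  ∀ n, wlkRound A k n t = wlkRound B k n s

variable {A : V → V → Prop} {B : W → W → Prop} {k : ℕ}

lemma wlk_fst {n : ℕ} {t : Fin k → V} {s : Fin k → W}
    (h : wlkRound A k (n + 1) t = wlkRound B k (n + 1) s) :
    wlkRound A k n t = wlkRound B k n s := by
  have h' : (wlkRound A k n t,
      Finset.univ.val.map fun w => fun i => wlkRound A k n (Function.update t i w)) =
      (wlkRound B k n s,
      Finset.univ.val.map fun w => fun i => wlkRound B k n (Function.update s i w)) := h
  exact congrArg Prod.fst h'

lemma wlk_snd {n : ℕ} {t : Fin k → V} {s : Fin k → W}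
    (h : wlkRound A k (n + 1) t = wlkRound B k (n + 1) s) :
    (Finset.univ.val.map fun w => fun i => wlkRound A k n (Function.update t i w)) =
      (Finset.univ.val.map fun w => fun i => wlkRound B k n (Function.update s i w)) := by
  have h' : (wlkRound A k n t,
      Finset.univ.val.map fun w => fun i => wlkRound A k n (Function.update t i w)) =
      (wlkRound B k n s,
      Finset.univ.val.map fun w => fun i => wlkRound B k n (Function.update s i w)) := h
  exact congrArg Prod.snd h'

lemma backForth {t : Fin k → V} {s : Fin k → W} (h : Rinf A B k t s) :
    ∃ e : V ≃ W, ∀ (x : V) (i : Fin k),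
      Rinf A B k (Function.update t i x) (Function.update s i (e x)) := by
  have h1 : ∀ n, ∃ e : V ≃ W, ∀ (x : V) (i : Fin k),
      wlkRound A k n (Function.update t i x) = wlkRound B k n (Function.update s i (e x)) := by
    intro n
    obtain ⟨e, he⟩ := exists_equiv_of_map_univ_eq _ _ (wlk_snd (h (n + 1)))
    exact ⟨e, fun x i => congrFun (he x) i⟩
  obtain ⟨e, he⟩ := forall_of_forall_exists (E := V ≃ W) (p := fun e n => ∀ (x : V) (i : Fin k),
      wlkRound A k n (Function.update t i x) = wlkRound B k n (Function.update s i (e x)))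
    (fun e n hp x i => wlk_fst (hp x i)) h1
  exact ⟨e, fun x i n => he n x i⟩

lemma fin_pick (hk : 2 ≤ k) (i : Fin k) : ∃ j : Fin k, j ≠ i := by
  rcases eq_or_ne (i : ℕ) 0 with h0 | h0
  · exact ⟨⟨1, by omega⟩, by intro hc; rw [Fin.ext_iff] at hc; simp [h0] at hc⟩
  · exact ⟨⟨0, by omega⟩, by intro hc; rw [Fin.ext_iff] at hc; simp at hc; omega⟩

/-- `k`-WL color equality at all rounds implies `2`-WL color equality of all coordinate
pairs at all rounds. -/
lemma pairL (hk : 2 ≤ k) :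
    ∀ (n : ℕ) (t : Fin k → V) (s : Fin k → W), Rinf A B k t s → ∀ i j : Fin k,
      wlRound A (fun _ _ => ()) n (t i, t j) = wlRound B (fun _ _ => ()) n (s i, s j) := by
  intro n
  induction n with
  | zero =>
    intro t s h i j
    have h0 := h 0
    have hij := congrFun (congrFun (show (fun i j => ((t i = t j : Prop), A (t i) (t j)))
      = fun i j => ((s i = s j : Prop), B (s i) (s j)) from h0) i) j
    have hji := congrFun (congrFun (show (fun i j => ((t i = t j : Prop), A (t i) (t j)))
      = fun i j => ((s i = s j : Prop), B (s i) (s j)) from h0) j) i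
    have e1 := congrArg Prod.fst hij
    have e2 := congrArg Prod.snd hij
    have e3 := congrArg Prod.snd hji
    show ((t i = t j : Prop), A (t i) (t j), A (t j) (t i), ())
      = ((s i = s j : Prop), B (s i) (s j), B (s j) (s i), ())
    simp only [Prod.mk.injEq]
    exact ⟨e1, e2, e3, trivial⟩
  | succ n ih =>
    intro t s h i j
    obtain ⟨e, he⟩ := backForth h
    obtain ⟨p, hp⟩ := fin_pick hk j
    obtain ⟨q, hq⟩ := fin_pick hk i
    show (wlRound A (fun _ _ => ()) n (t i, t j),
        Finset.univ.val.map fun u => (wlRound A (fun _ _ => ()) n (u, t j),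
          wlRound A (fun _ _ => ()) n (t i, u)))
      = (wlRound B (fun _ _ => ()) n (s i, s j),
        Finset.univ.val.map fun u => (wlRound B (fun _ _ => ()) n (u, s j),
          wlRound B (fun _ _ => ()) n (s i, u)))
    simp only [Prod.mk.injEq]
    constructor
    · exact ih t s h i j
    · have hpw : ∀ u : V,
          (wlRound A (fun _ _ => ()) n (u, t j), wlRound A (fun _ _ => ()) n (t i, u))
          = (wlRound B (fun _ _ => ()) n (e u, s j), wlRound B (fun _ _ => ()) n (s i, e u)) := by
        intro u
        have c1 := ih _ _ (he u p) p j
        rw [Function.update_self, Function.update_self, Function.update_of_ne hp.symm,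
          Function.update_of_ne hp.symm] at c1
        have c2 := ih _ _ (he u q) i q
        rw [Function.update_self, Function.update_self, Function.update_of_ne hq.symm,
          Function.update_of_ne hq.symm] at c2
        rw [c1, c2]
      calc (Finset.univ.val.map fun u => (wlRound A (fun _ _ => ()) n (u, t j),
              wlRound A (fun _ _ => ()) n (t i, u)))
          = Finset.univ.val.map fun u => (wlRound B (fun _ _ => ()) n (e u, s j),
              wlRound B (fun _ _ => ()) n (s i, e u)) :=
            Multiset.map_congr rfl (fun u _ => hpw u)
        _ = _ := map_univ_equiv_comp e (fun u => (wlRound B (fun _ _ => ()) n (u, s j),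
              wlRound B (fun _ _ => ()) n (s i, u)))

end WLk

open Function

section Core

variable {V Wt : Type} [Fintype V] [Fintype Wt] {k : ℕ}

/-- An anchored tuple pair: away from the scratch position `i₀`, the tuple `a` contains
every individualized vertex `vs[m]`, with `b` containing the matching vertex `ws m`. -/
def Anch (vs : List V) (k : ℕ) (ws : ℕ → Wt) (a : Fin k → V) (b : Fin k → Wt)
    (i₀ : Fin k) : Prop :=
  ∀ (m : ℕ) (hm : m < vs.length), ∃ j : Fin k, j ≠ i₀ ∧ a j = vs[m] ∧ b j = ws m

variable {A : V → V → Prop} {B : Wt → Wt → Prop}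

lemma wlk0_eq {t : Fin k → V} {s : Fin k → Wt} (h : wlkRound A k 0 t = wlkRound B k 0 s)
    (i j : Fin k) : (t i = t j) = (s i = s j) := by
  have h' : (fun i j => ((t i = t j : Prop), A (t i) (t j)))
      = (fun i j => ((s i = s j : Prop), B (s i) (s j))) := h
  exact congrArg Prod.fst (congrFun (congrFun h' i) j)

lemma claimC (hk : 2 ≤ k) (vs : List V) (ws : ℕ → Wt) :
    ∀ (n : ℕ) (u w : V) (u' : Wt) (a : Fin k → V) (b : Fin k → Wt) (i₀ : Fin k)
      (a' : Fin k → V) (b' : Fin k → Wt) (i₀' : Fin k),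
      Anch vs k ws a b i₀ → Anch vs k ws a' b' i₀' →
      Rinf A B k (update a i₀ u) (update b i₀ u') →
      Rinf A B k (update a' i₀' w) (update b' i₀' u') →
      wl1Round (fun x y => Quotient.mk (wl2Setoid A) (x, y)) vs n u
        = wl1Round (fun x y => Quotient.mk (wl2Setoid A) (x, y)) vs n w := by
  intro n
  induction n with
  | zero =>
    intro u w u' a b i₀ a' b' i₀' ha ha' h1 h2
    show vs.map (fun x => (x = u : Prop)) = vs.map (fun x => (x = w : Prop))
    refine List.map_congr_left ?_
    intro x hx
    obtain ⟨m, hm, rfl⟩ := List.mem_iff_getElem.mp hx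
    obtain ⟨j, hj, haj, hbj⟩ := ha m hm
    obtain ⟨j', hj', haj', hbj'⟩ := ha' m hm
    have E1 := wlk0_eq (h1 0) j i₀
    rw [Function.update_of_ne hj, Function.update_self] at E1
    rw [Function.update_of_ne hj, Function.update_self] at E1
    have E2 := wlk0_eq (h2 0) j' i₀'
    rw [Function.update_of_ne hj', Function.update_self] at E2
    rw [Function.update_of_ne hj', Function.update_self] at E2
    rw [haj, hbj] at E1
    rw [haj', hbj'] at E2
    exact E1.trans E2.symm
  | succ n ih =>
    intro u w u' a b i₀ a' b' i₀' ha ha' h1 h2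
    obtain ⟨e, he⟩ := backForth h1
    obtain ⟨e', he'⟩ := backForth h2
    obtain ⟨j₁, hj₁⟩ := fin_pick hk i₀
    obtain ⟨j₁', hj₁'⟩ := fin_pick hk i₀'
    set κ := fun x y : V => Quotient.mk (wl2Setoid A) (x, y) with hκ
    set σ : V ≃ V := e.trans e'.symm with hσ
    have hes : ∀ x : V, e' (σ x) = e x := by intro x; simp [hσ]
    have hTx : ∀ x : V, Rinf A B k (update a i₀ x) (update b i₀ (e x)) := by
      intro x; have := he x i₀
      rwa [Function.update_idem, Function.update_idem] at this
    have hSx : ∀ x : V, Rinf A B k (update a' i₀' x) (update b' i₀' (e' x)) := by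
      intro x; have := he' x i₀'
      rwa [Function.update_idem, Function.update_idem] at this
    have key1 : ∀ x, wl1Round κ vs n x = wl1Round κ vs n (σ x) := by
      intro x
      refine ih x (σ x) (e x) a b i₀ a' b' i₀' ha ha' (hTx x) ?_
      have := hSx (σ x)
      rwa [hes x] at this
    have key2 : ∀ x, κ u x = κ w (σ x) := by
      intro x
      refine Quotient.sound ?_
      show wl2 A (u, x) (w, σ x)
      intro nn
      have c1 := pairL hk nn _ _ (he x j₁) i₀ j₁
      rw [Function.update_of_ne (Ne.symm hj₁), Function.update_self,
        Function.update_self] at c1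
      rw [Function.update_of_ne (Ne.symm hj₁), Function.update_self,
        Function.update_self] at c1
      have c2 := pairL hk nn _ _ (he' (σ x) j₁') i₀' j₁'
      rw [Function.update_of_ne (Ne.symm hj₁'), Function.update_self,
        Function.update_self] at c2
      rw [Function.update_of_ne (Ne.symm hj₁'), Function.update_self,
        Function.update_self] at c2
      rw [hes x] at c2
      exact c1.trans c2.symm
    have key3 : ∀ x, κ x u = κ (σ x) w := by
      intro x
      refine Quotient.sound ?_
      show wl2 A (x, u) (σ x, w)
      intro nn
      have c1 := pairL hk nn _ _ (he x j₁) j₁ i₀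
      rw [Function.update_of_ne (Ne.symm hj₁), Function.update_self,
        Function.update_self] at c1
      rw [Function.update_of_ne (Ne.symm hj₁), Function.update_self,
        Function.update_self] at c1
      have c2 := pairL hk nn _ _ (he' (σ x) j₁') j₁' i₀'
      rw [Function.update_of_ne (Ne.symm hj₁'), Function.update_self,
        Function.update_self] at c2
      rw [Function.update_of_ne (Ne.symm hj₁'), Function.update_self,
        Function.update_self] at c2
      rw [hes x] at c2
      exact c1.trans c2.symm
    show (wl1Round κ vs n u, Finset.univ.val.map fun x => (wl1Round κ vs n x, κ u x, κ x u))
      = (wl1Round κ vs n w, Finset.univ.val.map fun x => (wl1Round κ vs n x, κ w x, κ x w))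
    simp only [Prod.mk.injEq]
    refine ⟨ih u w u' a b i₀ a' b' i₀' ha ha' h1 h2, ?_⟩
    calc (Finset.univ.val.map fun x => (wl1Round κ vs n x, κ u x, κ x u))
        = Finset.univ.val.map fun x => (wl1Round κ vs n (σ x), κ w (σ x), κ (σ x) w) :=
          Multiset.map_congr rfl (fun x _ => by rw [← key1 x, key2 x, key3 x])
      _ = _ := map_univ_equiv_comp σ (fun x => (wl1Round κ vs n x, κ w x, κ x w))

lemma claimA (hk : 2 ≤ k) (vs : List V) (hdisc : ∀ v : V, v ∈ discSet A vs) (ws : ℕ → Wt)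
    {u w : V} {u' : Wt} {a : Fin k → V} {b : Fin k → Wt} {i₀ : Fin k}
    {a' : Fin k → V} {b' : Fin k → Wt} {i₀' : Fin k}
    (ha : Anch vs k ws a b i₀) (ha' : Anch vs k ws a' b' i₀')
    (h1 : Rinf A B k (update a i₀ u) (update b i₀ u'))
    (h2 : Rinf A B k (update a' i₀' w) (update b' i₀' u')) : u = w :=
  hdisc w u (fun n => claimC hk vs ws n u w u' a b i₀ a' b' i₀' ha ha' h1 h2)

end Core

open Function

section Assemble

variable {V Wt : Type} [Fintype V] [Fintype Wt] {k : ℕ}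

lemma assemble (G : SimpleGraph V) (H : SimpleGraph Wt) (vs : List V) (hk : 2 ≤ k)
    (hdisc : ∀ v : V, v ∈ discSet G.Adj vs) (ws : ℕ → Wt) (v₁ v₂ : V) (w₁ w₂ : Wt)
    {aT : Fin k → V} {bT : Fin k → Wt} {iT : Fin k}
    {aS : Fin k → V} {bS : Fin k → Wt} {iS : Fin k}
    (hAT : Anch vs k ws aT bT iT) (hAS : Anch vs k ws aS bS iS)
    (hT : Rinf G.Adj H.Adj k (update aT iT v₁) (update bT iT w₁))
    (hS : Rinf G.Adj H.Adj k (update aS iS v₂) (update bS iS w₂)) :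
    ∃ φ : G ≃g H, φ v₁ = w₁ ∧ φ v₂ = w₂ := by
  obtain ⟨e₁, he₁⟩ := backForth hT
  have hT1 : ∀ x, Rinf G.Adj H.Adj k (update aT iT x) (update bT iT (e₁ x)) := fun x => by
    have := he₁ x iT; rwa [Function.update_idem, Function.update_idem] at this
  have funcT : ∀ u u', Rinf G.Adj H.Adj k (update aT iT u) (update bT iT u') → u' = e₁ u := by
    intro u u' hu
    have h2 := hT1 (e₁.symm u')
    rw [Equiv.apply_symm_apply] at h2
    have h3 : e₁.symm u' = u := claimA hk vs hdisc ws hAT hAT h2 hu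
    rw [← h3, Equiv.apply_symm_apply]
  obtain ⟨e₂, he₂⟩ := backForth hS
  have hS1 : ∀ x, Rinf G.Adj H.Adj k (update aS iS x) (update bS iS (e₂ x)) := fun x => by
    have := he₂ x iS; rwa [Function.update_idem, Function.update_idem] at this
  have funcS : ∀ u u', Rinf G.Adj H.Adj k (update aS iS u) (update bS iS u') → u' = e₂ u := by
    intro u u' hu
    have h2 := hS1 (e₂.symm u')
    rw [Equiv.apply_symm_apply] at h2
    have h3 : e₂.symm u' = u := claimA hk vs hdisc ws hAS hAS h2 hu
    rw [← h3, Equiv.apply_symm_apply]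
  have eeq : ∀ x, e₂ x = e₁ x := by
    intro x
    have h2 := hS1 (e₂.symm (e₁ x))
    rw [Equiv.apply_symm_apply] at h2
    have h3 : x = e₂.symm (e₁ x) := claimA hk vs hdisc ws hAT hAS (hT1 x) h2
    conv_lhs => rw [h3]
    exact e₂.apply_symm_apply (e₁ x)
  have hv₁ : e₁ v₁ = w₁ := (funcT v₁ w₁ hT).symm
  have hv₂ : e₁ v₂ = w₂ := by rw [← eeq]; exact (funcS v₂ w₂ hS).symm
  obtain ⟨j₁, hj₁⟩ := fin_pick hk iT
  have hpair : ∀ u x : V, ∀ nn, wlRound G.Adj (fun _ _ => ()) nn (u, x)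
      = wlRound H.Adj (fun _ _ => ()) nn (e₁ u, e₁ x) := by
    intro u x nn
    obtain ⟨eu, heu⟩ := backForth (hT1 u)
    have hx : eu x = e₁ x := by
      have h0 := heu x iT
      rw [Function.update_idem, Function.update_idem] at h0
      exact funcT x (eu x) h0
    have c := pairL hk nn _ _ (heu x j₁) iT j₁
    rw [Function.update_of_ne (Ne.symm hj₁), Function.update_self, Function.update_self] at c
    rw [Function.update_of_ne (Ne.symm hj₁), Function.update_self, Function.update_self] at c
    rwa [hx] at c
  have hadj : ∀ u x : V, H.Adj (e₁ u) (e₁ x) ↔ G.Adj u x := by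
    intro u x
    have h0 := hpair u x 0
    have h' : ((u = x : Prop), G.Adj u x, G.Adj x u, ())
        = ((e₁ u = e₁ x : Prop), H.Adj (e₁ u) (e₁ x), H.Adj (e₁ x) (e₁ u), ()) := h0
    have h2 := congrArg (fun z : Prop × Prop × Prop × Unit => z.2.1) h'
    exact (iff_of_eq h2).symm
  exact ⟨⟨e₁, fun {a b} => hadj a b⟩, hv₁, hv₂⟩

end Assemble

lemma update_self_of {α : Type} {β : Type} [DecidableEq α] (f : α → β) (a : α) (v : β) (h : f a = v) :
    Function.update f a v = f := by rw [← h, Function.update_eq_self]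


/-- Let `G` be a graph and `vs = [v₁, …, v_ℓ]` vertices with
`Disc_G(v₁,…,v_ℓ) = V(G)`, and let `k = max 2 (ℓ+1)`.  Then `k`-WL determines
pair orbits of `G`. -/
theorem statement_9 {V : Type} [Fintype V] (G : SimpleGraph V) (vs : List V)
    (hdisc : ∀ v : V, v ∈ discSet G.Adj vs) :
    ∀ v₁ v₂ : V, ∀ (W : Type) [Fintype W] (H : SimpleGraph W), ∀ w₁ w₂ : W,
      (∀ n, wlkRound G.Adj (max 2 (vs.length + 1)) n
              (fun i => if (i : ℕ) = 0 then v₁ else v₂) =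
            wlkRound H.Adj (max 2 (vs.length + 1)) n
              (fun i => if (i : ℕ) = 0 then w₁ else w₂)) →
      ∃ φ : G ≃g H, φ v₁ = w₁ ∧ φ v₂ = w₂ := by
  classical
  intro v₁ v₂ W _ H w₁ w₂ hyp
  set k := max 2 (vs.length + 1) with hkdef
  have hk : 2 ≤ k := le_max_left _ _
  have hlk : vs.length + 1 ≤ k := le_max_right _ _
  have h0k : 0 < k := by omega
  have h1k : 1 < k := by omega
  have hR0 : Rinf G.Adj H.Adj k (fun i => if (i : ℕ) = 0 then v₁ else v₂)
      (fun i => if (i : ℕ) = 0 then w₁ else w₂) := hyp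
  by_cases hL : vs.length = 0
  · -- no individualized vertices
    have hAT : Anch vs k (fun _ => w₁) (fun i => if (i : ℕ) = 0 then v₁ else v₂)
        (fun i => if (i : ℕ) = 0 then w₁ else w₂) ⟨0, h0k⟩ := by
      intro m hm; omega
    have hAS : Anch vs k (fun _ => w₁) (fun i => if (i : ℕ) = 0 then v₁ else v₂)
        (fun i => if (i : ℕ) = 0 then w₁ else w₂) ⟨1, h1k⟩ := by
      intro m hm; omega
    have hT : Rinf G.Adj H.Adj k
        (update (fun i => if (i : ℕ) = 0 then v₁ else v₂) ⟨0, h0k⟩ v₁)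
        (update (fun i => if (i : ℕ) = 0 then w₁ else w₂) ⟨0, h0k⟩ w₁) := by
      rw [update_self_of (fun i : Fin k => if (i : ℕ) = 0 then v₁ else v₂) ⟨0, h0k⟩ v₁
          (by exact if_pos rfl),
        update_self_of (fun i : Fin k => if (i : ℕ) = 0 then w₁ else w₂) ⟨0, h0k⟩ w₁
          (by exact if_pos rfl)]
      exact hR0
    have hS : Rinf G.Adj H.Adj k
        (update (fun i => if (i : ℕ) = 0 then v₁ else v₂) ⟨1, h1k⟩ v₂)
        (update (fun i => if (i : ℕ) = 0 then w₁ else w₂) ⟨1, h1k⟩ w₂) := by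
      rw [update_self_of (fun i : Fin k => if (i : ℕ) = 0 then v₁ else v₂) ⟨1, h1k⟩ v₂
          (by exact if_neg Nat.one_ne_zero),
        update_self_of (fun i : Fin k => if (i : ℕ) = 0 then w₁ else w₂) ⟨1, h1k⟩ w₂
          (by exact if_neg Nat.one_ne_zero)]
      exact hR0
    exact assemble G H vs hk hdisc (fun _ => w₁) v₁ v₂ w₁ w₂ hAT hAS hT hS
  · -- at least one individualized vertex
    have hL1 : 1 ≤ vs.length := by omega
    have FILL : ∀ m : ℕ, m ≤ vs.length - 1 → ∃ b : Fin k → W,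
        Rinf G.Adj H.Adj k
          (fun i : Fin k => if 1 ≤ (i : ℕ) ∧ (i : ℕ) ≤ m then vs.getD ((i : ℕ) - 1) v₁
            else if (i : ℕ) = 0 then v₁ else v₂) b ∧
        ∀ i : Fin k, ¬(1 ≤ (i : ℕ) ∧ (i : ℕ) ≤ m) →
          b i = (if (i : ℕ) = 0 then w₁ else w₂) := by
      intro m
      induction m with
      | zero =>
        intro _
        refine ⟨(fun i => if (i : ℕ) = 0 then w₁ else w₂), ?_, fun i _ => rfl⟩
        have hfun : (fun i : Fin k => if 1 ≤ (i : ℕ) ∧ (i : ℕ) ≤ 0 then vs.getD ((i : ℕ) - 1) v₁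
            else if (i : ℕ) = 0 then v₁ else v₂)
            = (fun i : Fin k => if (i : ℕ) = 0 then v₁ else v₂) := by
          funext i; rw [if_neg (by omega)]
        rw [hfun]; exact hR0
      | succ m ih =>
        intro hm1
        obtain ⟨b, hb, hbu⟩ := ih (by omega)
        obtain ⟨e, he⟩ := backForth hb
        have hmk : m + 1 < k := by omega
        refine ⟨update b ⟨m + 1, hmk⟩ (e (vs.getD m v₁)), ?_, ?_⟩
        · have h2 := he (vs.getD m v₁) ⟨m + 1, hmk⟩
          have ha : update (fun i : Fin k => if 1 ≤ (i : ℕ) ∧ (i : ℕ) ≤ m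
                then vs.getD ((i : ℕ) - 1) v₁ else if (i : ℕ) = 0 then v₁ else v₂)
                ⟨m + 1, hmk⟩ (vs.getD m v₁)
              = (fun i : Fin k => if 1 ≤ (i : ℕ) ∧ (i : ℕ) ≤ m + 1
                then vs.getD ((i : ℕ) - 1) v₁ else if (i : ℕ) = 0 then v₁ else v₂) := by
            funext i
            rcases eq_or_ne i ⟨m + 1, hmk⟩ with rfl | hne
            · rw [Function.update_self,
                if_pos ⟨(by exact Nat.le_add_left 1 m : (1 : ℕ) ≤ m + 1), le_rfl⟩]
              rfl
            · rw [Function.update_of_ne hne]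
              have hiv : (i : ℕ) ≠ m + 1 := fun hc => hne (Fin.ext hc)
              by_cases hc : 1 ≤ (i : ℕ) ∧ (i : ℕ) ≤ m
              · exact (if_pos hc).trans (if_pos ⟨hc.1, Nat.le_succ_of_le hc.2⟩).symm
              · exact (if_neg hc).trans (if_neg (fun hcc : 1 ≤ (i : ℕ) ∧ (i : ℕ) ≤ m + 1 =>
                  hc ⟨hcc.1, Nat.le_of_lt_succ (Nat.lt_of_le_of_ne hcc.2 hiv)⟩)).symm
          rwa [ha] at h2
        · intro i hi
          have hiv : (i : ℕ) ≠ m + 1 := by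
            intro hc; exact hi ⟨by omega, by omega⟩
          rw [Function.update_of_ne (fun hc => hiv (congrArg Fin.val hc))]
          exact hbu i (fun hc => hi ⟨hc.1, by omega⟩)
    obtain ⟨bF, hbF, hbFu⟩ := FILL (vs.length - 1) le_rfl
    obtain ⟨e, heF⟩ := backForth hbF
    have hposk : vs.length < k := by omega
    have hT' := heF (vs.getD (vs.length - 1) v₁) ⟨vs.length, hposk⟩
    have hS' := heF (vs.getD (vs.length - 1) v₁) ⟨0, h0k⟩
    set aF : Fin k → V := fun i : Fin k => if 1 ≤ (i : ℕ) ∧ (i : ℕ) ≤ vs.length - 1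
      then vs.getD ((i : ℕ) - 1) v₁ else if (i : ℕ) = 0 then v₁ else v₂ with haFdef
    set xs : V := vs.getD (vs.length - 1) v₁ with hxsdef
    set ys : W := e xs with hysdef
    set ws : ℕ → W := fun m => if m = vs.length - 1 then ys
      else if h : m + 1 < k then bF ⟨m + 1, h⟩ else ys with hwsdef
    have hne0L : (⟨0, h0k⟩ : Fin k) ≠ ⟨vs.length, hposk⟩ :=
      Fin.ne_of_val_ne (by show 0 ≠ vs.length; omega)
    have haF0 : aF ⟨0, h0k⟩ = v₁ := by
      show (if 1 ≤ (0 : ℕ) ∧ (0 : ℕ) ≤ vs.length - 1 then vs.getD ((0 : ℕ) - 1) v₁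
        else if (0 : ℕ) = 0 then v₁ else v₂) = v₁
      rw [if_neg (fun hc => Nat.not_succ_le_zero 0 hc.1), if_pos rfl]
    have haFL : aF ⟨vs.length, hposk⟩ = v₂ := by
      show (if 1 ≤ vs.length ∧ vs.length ≤ vs.length - 1 then vs.getD (vs.length - 1) v₁
        else if vs.length = 0 then v₁ else v₂) = v₂
      rw [if_neg (fun hc : 1 ≤ vs.length ∧ vs.length ≤ vs.length - 1 =>
        absurd hc.2 (by omega)), if_neg hL]
    have hbF0 : bF ⟨0, h0k⟩ = w₁ := by
      rw [hbFu ⟨0, h0k⟩ (fun hc => Nat.not_succ_le_zero 0 hc.1)]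
      show (if (0 : ℕ) = 0 then w₁ else w₂) = w₁
      exact if_pos rfl
    have hbFL : bF ⟨vs.length, hposk⟩ = w₂ := by
      rw [hbFu ⟨vs.length, hposk⟩ (fun hc : 1 ≤ vs.length ∧ vs.length ≤ vs.length - 1 =>
        absurd hc.2 (by omega))]
      show (if vs.length = 0 then w₁ else w₂) = w₂
      exact if_neg hL
    -- the two anchored relations
    have hAT : Anch vs k ws (update aF ⟨vs.length, hposk⟩ xs)
        (update bF ⟨vs.length, hposk⟩ ys) ⟨0, h0k⟩ := by
      intro m hm
      rcases eq_or_ne m (vs.length - 1) with hml | hml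
      · subst hml
        refine ⟨⟨vs.length, hposk⟩, hne0L.symm, ?_, ?_⟩
        · rw [Function.update_self, hxsdef]
          exact List.getD_eq_getElem vs v₁ (by omega)
        · rw [Function.update_self]
          show ys = if vs.length - 1 = vs.length - 1 then ys
            else if h : vs.length - 1 + 1 < k then bF ⟨vs.length - 1 + 1, h⟩ else ys
          rw [if_pos rfl]
      · have hmlt : m < vs.length - 1 := by omega
        have hjk : m + 1 < k := by omega
        refine ⟨⟨m + 1, hjk⟩, Fin.ne_of_val_ne (by show m + 1 ≠ 0; omega), ?_, ?_⟩
        · rw [Function.update_of_ne (Fin.ne_of_val_ne (by show m + 1 ≠ vs.length; omega))]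
          show (if 1 ≤ m + 1 ∧ m + 1 ≤ vs.length - 1 then vs.getD (m + 1 - 1) v₁
            else if m + 1 = 0 then v₁ else v₂) = vs[m]
          rw [if_pos ⟨Nat.le_add_left 1 m, by omega⟩]
          exact List.getD_eq_getElem vs v₁ hm
        · rw [Function.update_of_ne (Fin.ne_of_val_ne (by show m + 1 ≠ vs.length; omega))]
          show bF ⟨m + 1, hjk⟩
            = if m = vs.length - 1 then ys else if h : m + 1 < k then bF ⟨m + 1, h⟩ else ys
          rw [if_neg hml, dif_pos hjk]
    have hAS : Anch vs k ws (update aF ⟨0, h0k⟩ xs)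
        (update bF ⟨0, h0k⟩ ys) ⟨vs.length, hposk⟩ := by
      intro m hm
      rcases eq_or_ne m (vs.length - 1) with hml | hml
      · subst hml
        refine ⟨⟨0, h0k⟩, hne0L, ?_, ?_⟩
        · rw [Function.update_self, hxsdef]
          exact List.getD_eq_getElem vs v₁ (by omega)
        · rw [Function.update_self]
          show ys = if vs.length - 1 = vs.length - 1 then ys
            else if h : vs.length - 1 + 1 < k then bF ⟨vs.length - 1 + 1, h⟩ else ys
          rw [if_pos rfl]
      · have hmlt : m < vs.length - 1 := by omega
        have hjk : m + 1 < k := by omega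
        refine ⟨⟨m + 1, hjk⟩, Fin.ne_of_val_ne (by show m + 1 ≠ vs.length; omega), ?_, ?_⟩
        · rw [Function.update_of_ne (Fin.ne_of_val_ne (by show m + 1 ≠ 0; omega))]
          show (if 1 ≤ m + 1 ∧ m + 1 ≤ vs.length - 1 then vs.getD (m + 1 - 1) v₁
            else if m + 1 = 0 then v₁ else v₂) = vs[m]
          rw [if_pos ⟨Nat.le_add_left 1 m, by omega⟩]
          exact List.getD_eq_getElem vs v₁ hm
        · rw [Function.update_of_ne (Fin.ne_of_val_ne (by show m + 1 ≠ 0; omega))]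
          show bF ⟨m + 1, hjk⟩
            = if m = vs.length - 1 then ys else if h : m + 1 < k then bF ⟨m + 1, h⟩ else ys
          rw [if_neg hml, dif_pos hjk]
    have hT : Rinf G.Adj H.Adj k
        (update (update aF ⟨vs.length, hposk⟩ xs) ⟨0, h0k⟩ v₁)
        (update (update bF ⟨vs.length, hposk⟩ ys) ⟨0, h0k⟩ w₁) := by
      rw [update_self_of (update aF ⟨vs.length, hposk⟩ xs) ⟨0, h0k⟩ v₁
          (by rw [Function.update_of_ne hne0L]; exact haF0),
        update_self_of (update bF ⟨vs.length, hposk⟩ ys) ⟨0, h0k⟩ w₁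
          (by rw [Function.update_of_ne hne0L]; exact hbF0)]
      exact hT'
    have hS : Rinf G.Adj H.Adj k
        (update (update aF ⟨0, h0k⟩ xs) ⟨vs.length, hposk⟩ v₂)
        (update (update bF ⟨0, h0k⟩ ys) ⟨vs.length, hposk⟩ w₂) := by
      rw [update_self_of (update aF ⟨0, h0k⟩ xs) ⟨vs.length, hposk⟩ v₂
          (by rw [Function.update_of_ne hne0L.symm]; exact haFL),
        update_self_of (update bF ⟨0, h0k⟩ ys) ⟨vs.length, hposk⟩ w₂
          (by rw [Function.update_of_ne hne0L.symm]; exact hbFL)]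
      exact hS'
    exact assemble G H vs hk hdisc ws v₁ v₂ w₁ w₂ hAT hAS hT hS


end WL
end

section
/- Let G be a graph, let χ = WL²(G), and let c ∈ C_E(G,χ) be an edge color that defines a matching. Equip the quotient graph G/c with the arc coloring λ given by λ(X₁,X₂) = (χ/c)(X₁,X₂) for all arcs (X₁,X₂) of G/c. If 2-WL determines arc orbits (respectively, pair orbits) of the arc-colored graph (G/c, λ), then 2-WL determines arc orbits (respectively, pair orbits) of G. -/
namespace WL

open SimpleGraph

section Infra

variable {V W C : Type} [Fintype V] [Fintype W]

theorem wlRound_zero (A : V → V → Prop) (κ : V → V → C) (p : V × V) :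
    wlRound A κ 0 p = ((p.1 = p.2 : Prop), (A p.1 p.2 : Prop), (A p.2 p.1 : Prop), κ p.1 p.2) := rfl

theorem wlRound_succ (A : V → V → Prop) (κ : V → V → C) (n : ℕ) (p : V × V) :
    wlRound A κ (n+1) p = ((wlRound A κ n p : WLColor C n),
      Finset.univ.val.map fun u => (wlRound A κ n (u, p.2), wlRound A κ n (p.1, u))) := rfl

theorem exists_equiv_of_map_eq {γ : Type} {f : V → γ} {g : W → γ}
    (h : Multiset.map f Finset.univ.val = Multiset.map g Finset.univ.val) :
    ∃ σ : V ≃ W, ∀ a, f a = g (σ a) := by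
  classical
  have key : ∀ x : γ, Fintype.card {a : V // f a = x} = Fintype.card {b : W // g b = x} := by
    intro x
    have hc := congrArg (Multiset.count x) h
    rw [Multiset.count_map, Multiset.count_map] at hc
    rw [Fintype.card_subtype, Fintype.card_subtype]
    have e1 : ∀ {α : Type} [Fintype α] (f : α → γ),
        (Finset.univ.filter (fun a => f a = x)).card
        = Multiset.card (Multiset.filter (fun a => x = f a) Finset.univ.val) := by
      intro α _ f
      rw [Finset.card, Finset.filter_val]
      congr 1
      apply Multiset.filter_congr
      intro a _
      exact eq_comm
    rw [e1, e1, hc]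
  have fib : ∀ x : γ, {a : V // f a = x} ≃ {b : W // g b = x} := fun x =>
    Classical.choice (Fintype.card_eq.mp (key x))
  exact ⟨Equiv.ofFiberEquiv fib, fun a => (Equiv.ofFiberEquiv_map fib a).symm⟩

private def colSum (A : V → V → Prop) (κ : V → V → C) (B : W → W → Prop) (κ' : W → W → C)
    (n : ℕ) : (V × V) ⊕ (W × W) → WLColor C n
  | Sum.inl p => wlRound A κ n p
  | Sum.inr q => wlRound B κ' n q

variable {A : V → V → Prop} {κ : V → V → C} {B : W → W → Prop} {κ' : W → W → C}

private theorem colSum_down {n : ℕ} {x y} (h : colSum A κ B κ' (n+1) x = colSum A κ B κ' (n+1) y) :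
    colSum A κ B κ' n x = colSum A κ B κ' n y := by
  cases x <;> cases y <;> exact congrArg Prod.fst h

private theorem colSum_down_add {n : ℕ} : ∀ (k : ℕ) {x y},
    colSum A κ B κ' (n+k) x = colSum A κ B κ' (n+k) y →
    colSum A κ B κ' n x = colSum A κ B κ' n y
  | 0, _, _, h => h
  | (k+1), _, _, h => colSum_down_add k (colSum_down h)

private theorem colSum_down_le {m n : ℕ} (hle : n ≤ m) {x y}
    (h : colSum A κ B κ' m x = colSum A κ B κ' m y) :
    colSum A κ B κ' n x = colSum A κ B κ' n y := by
  obtain ⟨k, rfl⟩ := Nat.exists_eq_add_of_le hle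
  exact colSum_down_add k h

theorem exists_stable (A : V → V → Prop) (κ : V → V → C) (B : W → W → Prop) (κ' : W → W → C) :
    ∃ N, ∀ x y, colSum A κ B κ' N x = colSum A κ B κ' N y →
      ∀ n, colSum A κ B κ' n x = colSum A κ B κ' n y := by
  classical
  set D : ℕ → Finset (((V×V) ⊕ (W×W)) × ((V×V) ⊕ (W×W))) :=
    fun n => Finset.univ.filter (fun z => colSum A κ B κ' n z.1 = colSum A κ B κ' n z.2) with hD
  have anti : ∀ m n, n ≤ m → D m ⊆ D n := by
    intro m n hle z hz
    rw [hD, Finset.mem_filter] at hz ⊢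
    exact ⟨hz.1, colSum_down_le hle hz.2⟩
  obtain ⟨N, hN⟩ : ∃ N, ∀ m, (D N).card ≤ (D m).card := by
    have hmem := Nat.sInf_mem (s := Set.range fun n => (D n).card) ⟨(D 0).card, 0, rfl⟩
    obtain ⟨N, hNk⟩ := hmem
    refine ⟨N, fun m => ?_⟩
    have : (D N).card = sInf (Set.range fun n => (D n).card) := hNk
    rw [this]
    exact Nat.sInf_le ⟨m, rfl⟩
  refine ⟨N, fun x y h n => ?_⟩
  rcases le_or_gt n N with hle | hlt
  · exact colSum_down_le hle h
  · have heq : D n = D N :=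
      Finset.eq_of_subset_of_card_le (anti n N hlt.le) (hN n)
    have : (x, y) ∈ D N := by rw [hD, Finset.mem_filter]; exact ⟨Finset.mem_univ _, h⟩
    rw [← heq, hD, Finset.mem_filter] at this
    exact this.2

theorem exists_level (A : V → V → Prop) (κ : V → V → C) (B : W → W → Prop) (κ' : W → W → C) :
    ∃ N,
    (∀ p q, wlRound A κ N p = wlRound B κ' N q → wl2EqC A κ B κ' p q) ∧
    (∀ p p', wlRound A κ N p = wlRound A κ N p' → wl2EqC A κ A κ p p') ∧
    (∀ q q', wlRound B κ' N q = wlRound B κ' N q' → wl2EqC B κ' B κ' q q') := by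
  obtain ⟨N, hN⟩ := exists_stable A κ B κ'
  exact ⟨N, fun p q h => hN (Sum.inl p) (Sum.inr q) h,
    fun p p' h => hN (Sum.inl p) (Sum.inl p') h,
    fun q q' h => hN (Sum.inr q) (Sum.inr q') h⟩

theorem rowcol {p : V × V} {q : W × W} (h : wl2EqC A κ B κ' p q) :
    ∃ σ : V ≃ W, ∀ u, wl2EqC A κ B κ' (u, p.2) (σ u, q.2) ∧ wl2EqC A κ B κ' (p.1, u) (q.1, σ u) := by
  obtain ⟨N, hN, -, -⟩ := exists_level A κ B κ'
  have h1 := h (N+1)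
  rw [wlRound_succ, wlRound_succ] at h1
  have h2 := congrArg Prod.snd h1
  obtain ⟨σ, hσ⟩ := exists_equiv_of_map_eq h2
  exact ⟨σ, fun u => ⟨hN _ _ (congrArg Prod.fst (hσ u)), hN _ _ (congrArg Prod.snd (hσ u))⟩⟩

theorem eqC_eq_iff {p : V × V} {q : W × W} (h : wl2EqC A κ B κ' p q) :
    p.1 = p.2 ↔ q.1 = q.2 := by
  have := congrArg (fun t : WLColor C 0 => t.1) (h 0)
  exact iff_of_eq this

theorem eqC_adj_iff {p : V × V} {q : W × W} (h : wl2EqC A κ B κ' p q) :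
    A p.1 p.2 ↔ B q.1 q.2 := by
  have := congrArg (fun t : WLColor C 0 => t.2.1) (h 0)
  exact iff_of_eq this

theorem eqC_kappa {p : V × V} {q : W × W} (h : wl2EqC A κ B κ' p q) :
    κ p.1 p.2 = κ' q.1 q.2 :=
  congrArg (fun t : WLColor C 0 => t.2.2.2) (h 0)

theorem eqC_card (h : ∃ (p : V × V) (q : W × W), wl2EqC A κ B κ' p q) :
    Fintype.card V = Fintype.card W := by
  obtain ⟨p, q, h⟩ := h
  have h2 : Multiset.card (Multiset.map
        (fun u : V => (wlRound A κ 0 (u, p.2), wlRound A κ 0 (p.1, u))) Finset.univ.val)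
      = Multiset.card (Multiset.map
        (fun u : W => (wlRound B κ' 0 (u, q.2), wlRound B κ' 0 (q.1, u))) Finset.univ.val) :=
    congrArg (fun t : WLColor C 1 => Multiset.card t.2) (h 1)
  rw [Multiset.card_map, Multiset.card_map] at h2
  exact h2

theorem diag_fst {p : V × V} {q : W × W} (h : wl2EqC A κ B κ' p q) :
    wl2EqC A κ B κ' (p.1, p.1) (q.1, q.1) := by
  obtain ⟨σ, hσ⟩ := rowcol h
  have h1 := (hσ p.1).2
  have h2 : q.1 = σ p.1 := (eqC_eq_iff h1).mp rfl
  rwa [← h2] at h1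

theorem diag_snd {p : V × V} {q : W × W} (h : wl2EqC A κ B κ' p q) :
    wl2EqC A κ B κ' (p.2, p.2) (q.2, q.2) := by
  obtain ⟨σ, hσ⟩ := rowcol h
  have h1 := (hσ p.2).1
  have h2 : σ p.2 = q.2 := (eqC_eq_iff h1).mp rfl
  rwa [h2] at h1

end Infra

section Transpose

variable {V W : Type} [Fintype V] [Fintype W]

theorem transpose_aux (A : V → V → Prop) (B : W → W → Prop) :
    ∀ (n : ℕ) (a b : V) (a' b' : W),
      wlRound A (fun _ _ => ()) n (a, b) = wlRound B (fun _ _ => ()) n (a', b') →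
      wlRound A (fun _ _ => ()) n (b, a) = wlRound B (fun _ _ => ()) n (b', a') := by
  intro n
  induction n with
  | zero =>
    intro a b a' b' h
    have e1 : (a = b) = (a' = b') := congrArg (fun t : WLColor Unit 0 => t.1) h
    have e2 : (A a b : Prop) = (B a' b' : Prop) := congrArg (fun t : WLColor Unit 0 => t.2.1) h
    have e3 : (A b a : Prop) = (B b' a' : Prop) := congrArg (fun t : WLColor Unit 0 => t.2.2.1) h
    have e1' : (b = a) = (b' = a') := by
      apply propext
      constructor
      · intro hh; exact ((iff_of_eq e1).mp hh.symm).symm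
      · intro hh; exact ((iff_of_eq e1).mpr hh.symm).symm
    show ((b = a : Prop), (A b a : Prop), (A a b : Prop), ()) =
      ((b' = a' : Prop), (B b' a' : Prop), (B a' b' : Prop), ())
    rw [e1', e2, e3]
  | succ n ih =>
    intro a b a' b' h
    have hfst : wlRound A (fun _ _ => ()) n (a,b) = wlRound B (fun _ _ => ()) n (a',b') :=
      congrArg Prod.fst h
    have hsnd := congrArg Prod.snd h
    obtain ⟨σ, hσ⟩ := exists_equiv_of_map_eq hsnd
    rw [wlRound_succ, wlRound_succ]
    refine congrArg₂ Prod.mk (ih a b a' b' hfst) ?_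
    have key : ∀ u : V,
        ((wlRound A (fun _ _ => ()) n (u, a), wlRound A (fun _ _ => ()) n (b, u)) :
          WLColor Unit n × WLColor Unit n)
        = ((fun u : W => (wlRound B (fun _ _ => ()) n (u, a'), wlRound B (fun _ _ => ()) n (b', u))) ∘ σ) u := by
      intro u
      have r1 : wlRound A (fun _ _ => ()) n (u, b) = wlRound B (fun _ _ => ()) n (σ u, b') :=
        congrArg Prod.fst (hσ u)
      have r2 : wlRound A (fun _ _ => ()) n (a, u) = wlRound B (fun _ _ => ()) n (a', σ u) :=
        congrArg Prod.snd (hσ u)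
      exact congrArg₂ Prod.mk (ih a u a' (σ u) r2) (ih u b (σ u) b' r1)
    show Finset.univ.val.map (fun u : V =>
        (wlRound A (fun _ _ => ()) n (u, a), wlRound A (fun _ _ => ()) n (b, u)))
      = Finset.univ.val.map (fun u : W =>
        (wlRound B (fun _ _ => ()) n (u, a'), wlRound B (fun _ _ => ()) n (b', u)))
    rw [funext key, ← Multiset.map_map, Multiset.map_univ_val_equiv]

theorem transpose {A : V → V → Prop} {B : W → W → Prop} {a b : V} {a' b' : W}
    (h : wl2Eq A B (a, b) (a', b')) : wl2Eq A B (b, a) (b', a') :=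
  fun n => transpose_aux A B n a b a' b' (h n)

end Transpose

section Matching

variable {V W : Type} [Fintype V] [Fintype W]

/-- cross color-equality to the color `c` -/
def crel (G : SimpleGraph V) (c : V × V) (B : SimpleGraph W) (x y : W) : Prop :=
  wl2Eq G.Adj B.Adj c (x, y)

theorem wl2_refl (A : V → V → Prop) (p : V × V) : wl2 A p p := fun _ => rfl

theorem hcc (G : SimpleGraph V) (c : V × V) : wl2 G.Adj (c.1, c.2) c := by
  rw [Prod.mk.eta]; exact fun _ => rfl

variable {G : SimpleGraph V} {c : V × V} {B : SimpleGraph W}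

theorem crel_of_wl2 {v w : V} (h : wl2 G.Adj (v, w) c) : crel G c G v w :=
  fun n => (h n).symm

theorem wl2_of_crel {v w : V} (h : crel G c G v w) : wl2 G.Adj (v, w) c :=
  fun n => (h n).symm

theorem crel_ne (hc : EdgeColor G c) {x y : W} (h : crel G c B x y) : x ≠ y := by
  intro he
  exact G.ne_of_adj hc ((eqC_eq_iff h).mpr he)

theorem crel_badj (hc : EdgeColor G c) {x y : W} (h : crel G c B x y) : B.Adj x y :=
  (eqC_adj_iff h).mp hc

theorem hm_vc (hm : DefinesMatching G c) : ¬ wl2 G.Adj (c.1, c.1) (c.2, c.2) :=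
  (hm c.1 c.2 (hcc G c)).1

theorem hm_l (hm : DefinesMatching G c) : ∀ v', wl2 G.Adj (v', c.2) c → v' = c.1 :=
  (hm c.1 c.2 (hcc G c)).2.1

theorem hm_r (hm : DefinesMatching G c) : ∀ w', wl2 G.Adj (c.1, w') c → w' = c.2 :=
  (hm c.1 c.2 (hcc G c)).2.2

theorem crel_unique_left (hm : DefinesMatching G c) {x x' y : W}
    (h : crel G c B x y) (h' : crel G c B x' y) : x = x' := by
  obtain ⟨σ, hσ⟩ := rowcol (h : wl2EqC G.Adj _ B.Adj _ c (x, y))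
  have key : ∀ z : W, crel G c B z y → z = σ c.1 := by
    intro z hz
    have r1 := (hσ (σ.symm z)).1
    rw [σ.apply_symm_apply] at r1
    have r2 : wl2 G.Adj (σ.symm z, c.2) c := fun n => (r1 n).trans ((hz n).symm)
    have r3 := hm_l hm _ r2
    rw [← r3, σ.apply_symm_apply]
  rw [key x h, key x' h']

theorem crel_unique_right (hm : DefinesMatching G c) {x y y' : W}
    (h : crel G c B x y) (h' : crel G c B x y') : y = y' := by
  obtain ⟨σ, hσ⟩ := rowcol (h : wl2EqC G.Adj _ B.Adj _ c (x, y))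
  have key : ∀ z : W, crel G c B x z → z = σ c.2 := by
    intro z hz
    have r1 := (hσ (σ.symm z)).2
    rw [σ.apply_symm_apply] at r1
    have r2 : wl2 G.Adj (c.1, σ.symm z) c := fun n => (r1 n).trans ((hz n).symm)
    have r3 := hm_r hm _ r2
    rw [← r3, σ.apply_symm_apply]
  rw [key y h, key y' h']

theorem crel_vc1 {x y : W} (h : crel G c B x y) : wl2Eq G.Adj B.Adj (c.1, c.1) (x, x) :=
  diag_fst h

theorem crel_vc2 {x y : W} (h : crel G c B x y) : wl2Eq G.Adj B.Adj (c.2, c.2) (y, y) :=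
  diag_snd h

theorem crel_mixed (hm : DefinesMatching G c) {x y z : W}
    (h1 : crel G c B x y) (h2 : crel G c B y z) : False := by
  apply hm_vc hm
  exact fun n => (crel_vc1 h2 n).trans ((crel_vc2 h1 n).symm)

theorem crel_antisymm (hm : DefinesMatching G c) {x y : W}
    (h1 : crel G c B x y) (h2 : crel G c B y x) : False := by
  apply hm_vc hm
  exact fun n => (crel_vc1 h1 n).trans ((crel_vc2 h2 n).symm)

theorem crel_deg (hm : DefinesMatching G c) {y x z : W}
    (hax : crel G c B y x ∨ crel G c B x y) (haz : crel G c B y z ∨ crel G c B z y) :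
    x = z := by
  rcases hax with h1 | h1 <;> rcases haz with h2 | h2
  · exact crel_unique_right hm h1 h2
  · exact absurd h2 (fun h2 => crel_mixed hm h2 h1)
  · exact absurd h1 (fun h1 => crel_mixed hm h1 h2)
  · exact crel_unique_left hm h1 h2

/-- the matching graph `B[c]` for an arbitrary graph `B`, via cross-equality to `c`. -/
def colorGraphB (G : SimpleGraph V) (c : V × V) (B : SimpleGraph W) : SimpleGraph W :=
  SimpleGraph.fromRel fun x y => B.Adj x y ∧ crel G c B x y

theorem colorGraphB_adj (hc : EdgeColor G c) {x y : W} :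
    (colorGraphB G c B).Adj x y ↔ crel G c B x y ∨ crel G c B y x := by
  rw [colorGraphB, SimpleGraph.fromRel_adj]
  constructor
  · rintro ⟨-, ⟨-, h⟩ | ⟨-, h⟩⟩
    exacts [Or.inl h, Or.inr h]
  · rintro (h | h)
    · exact ⟨crel_ne hc h, Or.inl ⟨crel_badj hc h, h⟩⟩
    · exact ⟨(crel_ne hc h).symm, Or.inr ⟨crel_badj hc h, h⟩⟩

theorem colorGraph_adj (hc : EdgeColor G c) {v w : V} :
    (colorGraph G c).Adj v w ↔ crel G c G v w ∨ crel G c G w v := by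
  rw [colorGraph, SimpleGraph.fromRel_adj]
  constructor
  · rintro ⟨-, ⟨-, h⟩ | ⟨-, h⟩⟩
    exacts [Or.inl (crel_of_wl2 h), Or.inr (crel_of_wl2 h)]
  · rintro (h | h)
    · exact ⟨crel_ne hc h, Or.inl ⟨crel_badj hc h, wl2_of_crel h⟩⟩
    · exact ⟨(crel_ne hc h).symm, Or.inr ⟨crel_badj hc h, wl2_of_crel h⟩⟩

theorem reach_iff_of_deg {α : Type} {M : SimpleGraph α}
    (hdeg : ∀ ⦃y x z : α⦄, M.Adj y x → M.Adj y z → x = z) {x y : α} :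
    M.Reachable x y ↔ x = y ∨ M.Adj x y := by
  constructor
  · intro hr
    obtain ⟨w⟩ := hr
    induction w with
    | nil => exact Or.inl rfl
    | cons h p ih =>
      rcases ih with rfl | h2
      · exact Or.inr h
      · exact Or.inl (hdeg h.symm h2)
  · rintro (rfl | h)
    exacts [SimpleGraph.Reachable.refl _, h.reachable]

theorem colorGraphB_deg (hc : EdgeColor G c) (hm : DefinesMatching G c) :
    ∀ ⦃y x z : W⦄, (colorGraphB G c B).Adj y x → (colorGraphB G c B).Adj y z → x = z := by
  intro y x z h1 h2
  rw [colorGraphB_adj hc] at h1 h2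
  exact crel_deg hm h1 h2

theorem colorGraph_deg (hc : EdgeColor G c) (hm : DefinesMatching G c) :
    ∀ ⦃y x z : V⦄, (colorGraph G c).Adj y x → (colorGraph G c).Adj y z → x = z := by
  intro y x z h1 h2
  rw [colorGraph_adj hc] at h1 h2
  exact crel_deg hm h1 h2

/-- the contraction setoid for `B`. -/
def ctSetoid (G : SimpleGraph V) (c : V × V) (B : SimpleGraph W) : Setoid W :=
  (colorGraphB G c B).reachableSetoid

noncomputable instance ctFintype (G : SimpleGraph V) (c : V × V) (B : SimpleGraph W) :
    Fintype (Quotient (ctSetoid G c B)) :=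
  @Quotient.fintype W _ (ctSetoid G c B) fun _ _ => Classical.dec _

theorem ctSetoid_mk_eq (hc : EdgeColor G c) (hm : DefinesMatching G c) {x y : W} :
    (Quotient.mk (ctSetoid G c B) x = Quotient.mk (ctSetoid G c B) y)
      ↔ x = y ∨ crel G c B x y ∨ crel G c B y x := by
  rw [Quotient.eq]
  change (colorGraphB G c B).Reachable x y ↔ _
  rw [reach_iff_of_deg (colorGraphB_deg hc hm), colorGraphB_adj hc]

theorem contractSetoid_mk_eq (hc : EdgeColor G c) (hm : DefinesMatching G c) {v w : V} :
    (Quotient.mk (contractSetoid G c) v = Quotient.mk (contractSetoid G c) w)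
      ↔ v = w ∨ crel G c G v w ∨ crel G c G w v := by
  rw [Quotient.eq]
  change (colorGraph G c).Reachable v w ↔ _
  rw [reach_iff_of_deg (colorGraph_deg hc hm), colorGraph_adj hc]

end Matching

section Contract

variable {V W : Type} [Fintype V] [Fintype W] {G : SimpleGraph V} {c : V × V} {B : SimpleGraph W}

/-- contraction of `B` along the components of `B[c]`. -/
def ctGraph (G : SimpleGraph V) (c : V × V) (B : SimpleGraph W) :
    SimpleGraph (Quotient (ctSetoid G c B)) :=
  SimpleGraph.fromRel fun X Y =>
    ∃ x y : W, Quotient.mk (ctSetoid G c B) x = X ∧ Quotient.mk (ctSetoid G c B) y = Y ∧ B.Adj x y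

/- the color of a pair of `B` as a `WL²(G)`-class (with default `d`). -/
open Classical in
noncomputable def gB (G : SimpleGraph V) (B : SimpleGraph W) (d : V × V) (r : W × W) :
    Quotient (wl2Setoid G.Adj) :=
  if h : ∃ p : V × V, wl2Eq G.Adj B.Adj p r then Quotient.mk (wl2Setoid G.Adj) h.choose
  else Quotient.mk (wl2Setoid G.Adj) d

/- the coloring `χ/c` on the contraction of `B`, with values in `WL²(G)`-classes. -/
open Classical in
noncomputable def κB (G : SimpleGraph V) (c : V × V) (B : SimpleGraph W) :
    Quotient (ctSetoid G c B) → Quotient (ctSetoid G c B) →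
      Multiset (Quotient (wl2Setoid G.Adj)) :=
  fun X Y =>
    ((Finset.univ (α := W × W)).val.filter fun r : W × W =>
        Quotient.mk (ctSetoid G c B) r.1 = X ∧ Quotient.mk (ctSetoid G c B) r.2 = Y).map
      (gB G B c)

theorem gB_eq_of (d : V × V) {p : V × V} {r : W × W} (h : wl2Eq G.Adj B.Adj p r) :
    gB G B d r = Quotient.mk (wl2Setoid G.Adj) p := by
  rw [gB, dif_pos ⟨p, h⟩]
  apply Quotient.sound
  have hs := (⟨p, h⟩ : ∃ p : V × V, wl2Eq G.Adj B.Adj p r).choose_spec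
  exact fun n => (hs n).trans ((h n).symm)

theorem wl2Eq_of_gB (d : V × V) {p : V × V} {r : W × W}
    (hcov : ∃ p : V × V, wl2Eq G.Adj B.Adj p r)
    (h : gB G B d r = Quotient.mk (wl2Setoid G.Adj) p) : wl2Eq G.Adj B.Adj p r := by
  rw [gB, dif_pos hcov] at h
  have h2 : wl2 G.Adj hcov.choose p := Quotient.exact h
  exact fun n => ((h2 n).symm).trans (hcov.choose_spec n)

theorem sigma_strong (hc : EdgeColor G c) (hm : DefinesMatching G c)
    {p : V × V} {q : W × W} (h : wl2Eq G.Adj B.Adj p q) :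
    ∃ σ : V ≃ W,
      (∀ u, wl2Eq G.Adj B.Adj (u, p.2) (σ u, q.2) ∧ wl2Eq G.Adj B.Adj (p.1, u) (q.1, σ u)) ∧
      σ p.1 = q.1 ∧ σ p.2 = q.2 ∧
      (∀ a : V, Quotient.mk (contractSetoid G c) a = Quotient.mk (contractSetoid G c) p.1 ↔
        Quotient.mk (ctSetoid G c B) (σ a) = Quotient.mk (ctSetoid G c B) q.1) ∧
      (∀ b : V, Quotient.mk (contractSetoid G c) b = Quotient.mk (contractSetoid G c) p.2 ↔
        Quotient.mk (ctSetoid G c B) (σ b) = Quotient.mk (ctSetoid G c B) q.2) := by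
  obtain ⟨σ, hσ⟩ := rowcol (h : wl2EqC G.Adj _ B.Adj _ p q)
  have hp1 : σ p.1 = q.1 := ((eqC_eq_iff (hσ p.1).2).mp rfl).symm
  have hp2 : σ p.2 = q.2 := (eqC_eq_iff (hσ p.2).1).mp rfl
  refine ⟨σ, hσ, hp1, hp2, ?_, ?_⟩
  · intro a
    rw [contractSetoid_mk_eq hc hm, ctSetoid_mk_eq hc hm]
    have e1 : a = p.1 ↔ σ a = q.1 := by
      rw [← hp1]; exact ⟨fun hh => by rw [hh], fun hh => σ.injective hh⟩
    have row := (hσ a).2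
    have rowT := transpose row
    have e2 : crel G c G p.1 a ↔ crel G c B q.1 (σ a) :=
      ⟨fun hr n => (hr n).trans (row n), fun hr n => (hr n).trans ((row n).symm)⟩
    have e3 : crel G c G a p.1 ↔ crel G c B (σ a) q.1 :=
      ⟨fun hr n => (hr n).trans (rowT n), fun hr n => (hr n).trans ((rowT n).symm)⟩
    constructor
    · rintro (hh | hh | hh)
      exacts [Or.inl (e1.mp hh), Or.inr (Or.inl (e3.mp hh)), Or.inr (Or.inr (e2.mp hh))]
    · rintro (hh | hh | hh)
      exacts [Or.inl (e1.mpr hh), Or.inr (Or.inl (e3.mpr hh)), Or.inr (Or.inr (e2.mpr hh))]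
  · intro b
    rw [contractSetoid_mk_eq hc hm, ctSetoid_mk_eq hc hm]
    have e1 : b = p.2 ↔ σ b = q.2 := by
      rw [← hp2]; exact ⟨fun hh => by rw [hh], fun hh => σ.injective hh⟩
    have col := (hσ b).1
    have colT := transpose col
    have e2 : crel G c G p.2 b ↔ crel G c B q.2 (σ b) :=
      ⟨fun hr n => (hr n).trans (colT n), fun hr n => (hr n).trans ((colT n).symm)⟩
    have e3 : crel G c G b p.2 ↔ crel G c B (σ b) q.2 :=
      ⟨fun hr n => (hr n).trans (col n), fun hr n => (hr n).trans ((col n).symm)⟩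
    constructor
    · rintro (hh | hh | hh)
      exacts [Or.inl (e1.mp hh), Or.inr (Or.inl (e3.mp hh)), Or.inr (Or.inr (e2.mp hh))]
    · rintro (hh | hh | hh)
      exacts [Or.inl (e1.mpr hh), Or.inr (Or.inl (e3.mpr hh)), Or.inr (Or.inr (e2.mpr hh))]

end Contract

section Mates

variable {V W : Type} [Fintype V] [Fintype W] {G : SimpleGraph V} {c : V × V} {B : SimpleGraph W}

theorem move_snd (hc : EdgeColor G c) (hm : DefinesMatching G c) {a : V} {p2 : V} {x : W} {q2 : W}
    (hax : wl2Eq G.Adj B.Adj (a, p2) (x, q2)) {b : V}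
    (hb : Quotient.mk (contractSetoid G c) b = Quotient.mk (contractSetoid G c) p2) :
    ∃ y : W, Quotient.mk (ctSetoid G c B) y = Quotient.mk (ctSetoid G c B) q2 ∧
      wl2Eq G.Adj B.Adj (a, b) (x, y) := by
  obtain ⟨σ, hσ, -, -, -, r2⟩ := sigma_strong hc hm hax
  exact ⟨σ b, (r2 b).mp hb, (hσ b).2⟩

theorem move_snd_rev (hc : EdgeColor G c) (hm : DefinesMatching G c) {a : V} {p2 : V} {x : W}
    {q2 : W} (hax : wl2Eq G.Adj B.Adj (a, p2) (x, q2)) {y : W}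
    (hy : Quotient.mk (ctSetoid G c B) y = Quotient.mk (ctSetoid G c B) q2) :
    ∃ b : V, Quotient.mk (contractSetoid G c) b = Quotient.mk (contractSetoid G c) p2 ∧
      wl2Eq G.Adj B.Adj (a, b) (x, y) := by
  obtain ⟨σ, hσ, -, -, -, r2⟩ := sigma_strong hc hm hax
  refine ⟨σ.symm y, ?_, ?_⟩
  · have := (r2 (σ.symm y))
    rw [σ.apply_symm_apply] at this
    exact this.mpr hy
  · have := (hσ (σ.symm y)).2
    rwa [σ.apply_symm_apply] at this

/-- `x` is covered by the matching color in `B`. -/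
def matchedB (G : SimpleGraph V) (c : V × V) (B : SimpleGraph W) (x : W) : Prop :=
  ∃ t, crel G c B x t ∨ crel G c B t x

open Classical in
noncomputable def mate (G : SimpleGraph V) (c : V × V) (B : SimpleGraph W) (x : W) : W :=
  if h : matchedB G c B x then h.choose else x

theorem mate_spec {x : W} (h : matchedB G c B x) :
    crel G c B x (mate G c B x) ∨ crel G c B (mate G c B x) x := by
  rw [mate, dif_pos h]
  exact h.choose_spec

theorem mate_eq (hm : DefinesMatching G c) {x t : W}
    (ht : crel G c B x t ∨ crel G c B t x) : mate G c B x = t :=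
  crel_deg hm (mate_spec ⟨t, ht⟩) ht

theorem mate_ne (hc : EdgeColor G c) {x : W} (h : matchedB G c B x) : mate G c B x ≠ x := by
  rcases mate_spec h with h' | h'
  · exact (crel_ne hc h').symm
  · exact crel_ne hc h'

theorem matched_transfer {u : V} {x : W} (h : wl2Eq G.Adj B.Adj (u, u) (x, x)) :
    matchedB G c G u ↔ matchedB G c B x := by
  obtain ⟨σ, hσ⟩ := rowcol (h : wl2EqC G.Adj _ B.Adj _ (u, u) (x, x))
  constructor
  · rintro ⟨t, ht | ht⟩
    · exact ⟨σ t, Or.inl fun n => (ht n).trans ((hσ t).2 n)⟩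
    · exact ⟨σ t, Or.inr fun n => (ht n).trans ((hσ t).1 n)⟩
  · rintro ⟨t, ht | ht⟩
    · refine ⟨σ.symm t, Or.inl fun n => (ht n).trans ?_⟩
      have := (hσ (σ.symm t)).2 n
      rw [σ.apply_symm_apply] at this
      exact this.symm
    · refine ⟨σ.symm t, Or.inr fun n => (ht n).trans ?_⟩
      have := (hσ (σ.symm t)).1 n
      rw [σ.apply_symm_apply] at this
      exact this.symm

theorem clash (hm : DefinesMatching G c) {x t : W}
    (hxt : crel G c B x t ∨ crel G c B t x) (heq : wl2Eq B.Adj B.Adj (x, x) (t, t)) :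
    False := by
  rcases hxt with h1 | h1
  · exact hm_vc hm fun n => ((crel_vc1 h1 n).trans (heq n)).trans ((crel_vc2 h1 n).symm)
  · exact hm_vc hm fun n => ((crel_vc1 h1 n).trans ((heq n).symm)).trans ((crel_vc2 h1 n).symm)

/- transfer map between the fibers of corresponding contracted classes. -/
open Classical in
noncomputable def eMap (G : SimpleGraph V) (c : V × V) (B : SimpleGraph W) (pv : V) (qw : W) : V → W :=
  fun a => if a = pv then qw else mate G c B qw

open Classical in
noncomputable def eMapR (G : SimpleGraph V) (c : V × V) (B : SimpleGraph W) (pv : V) (qw : W) : W → V :=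
  fun x => if x = qw then pv else mate G c G pv

theorem eMap_snd (hc : EdgeColor G c) (hm : DefinesMatching G c) {a p2 : V} {x q2 : W}
    (hax : wl2Eq G.Adj B.Adj (a, p2) (x, q2)) {b : V}
    (hb : Quotient.mk (contractSetoid G c) b = Quotient.mk (contractSetoid G c) p2) :
    Quotient.mk (ctSetoid G c B) (eMap G c B p2 q2 b) = Quotient.mk (ctSetoid G c B) q2 ∧
    wl2Eq G.Adj B.Adj (a, b) (x, eMap G c B p2 q2 b) ∧
    eMapR G c B p2 q2 (eMap G c B p2 q2 b) = b := by
  by_cases hbp : b = p2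
  · subst hbp
    have e1 : eMap G c B b q2 b = q2 := by simp [eMap]
    have e2 : eMapR G c B b q2 q2 = b := by simp [eMapR]
    rw [e1, e2]
    exact ⟨rfl, hax, rfl⟩
  · have hfib := (contractSetoid_mk_eq hc hm).mp hb
    rcases hfib with h' | hmad
    · exact absurd h' hbp
    obtain ⟨y, hyq2, hrel⟩ := move_snd hc hm hax hb
    have hyne : y ≠ q2 := by
      intro he
      subst he
      have hGG : wl2Eq G.Adj G.Adj (a, b) (a, p2) :=
        fun n => (hrel n).trans ((hax n).symm)
      have hd : wl2Eq G.Adj G.Adj (b, b) (p2, p2) := diag_snd hGG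
      rcases hmad with h2 | h2
      · exact clash hm (Or.inr h2) (fun n => (hd n).symm)
      · exact clash hm (Or.inl h2) (fun n => (hd n).symm)
    have hyfib := (ctSetoid_mk_eq hc hm).mp hyq2
    rcases hyfib with h' | hmady
    · exact absurd h' hyne
    have hq2m : matchedB G c B q2 := by
      rcases hmady with h2 | h2
      · exact ⟨y, Or.inr h2⟩
      · exact ⟨y, Or.inl h2⟩
    have hmateq : mate G c B q2 = y := by
      apply mate_eq hm
      rcases hmady with h2 | h2
      · exact Or.inr h2
      · exact Or.inl h2
    have hbmate : mate G c G p2 = b := by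
      apply mate_eq hm
      rcases hmad with h2 | h2
      · exact Or.inr h2
      · exact Or.inl h2
    have e1 : eMap G c B p2 q2 b = y := by simp [eMap, hbp, hmateq]
    have e2 : eMapR G c B p2 q2 y = b := by simp [eMapR, hyne, hbmate]
    rw [e1, e2]
    exact ⟨hyq2, hrel, rfl⟩

theorem eMap_snd_rev (hc : EdgeColor G c) (hm : DefinesMatching G c) {a p2 : V} {x q2 : W}
    (hax : wl2Eq G.Adj B.Adj (a, p2) (x, q2)) {y : W}
    (hy : Quotient.mk (ctSetoid G c B) y = Quotient.mk (ctSetoid G c B) q2) :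
    Quotient.mk (contractSetoid G c) (eMapR G c B p2 q2 y) = Quotient.mk (contractSetoid G c) p2 ∧
    wl2Eq G.Adj B.Adj (a, eMapR G c B p2 q2 y) (x, y) ∧
    eMap G c B p2 q2 (eMapR G c B p2 q2 y) = y := by
  by_cases hyq : y = q2
  · subst hyq
    have e1 : eMapR G c B p2 y y = p2 := by simp [eMapR]
    have e2 : eMap G c B p2 y p2 = y := by simp [eMap]
    rw [e1, e2]
    exact ⟨rfl, hax, rfl⟩
  · have hfib := (ctSetoid_mk_eq hc hm).mp hy
    rcases hfib with h' | hmady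
    · exact absurd h' hyq
    obtain ⟨b, hbp2, hrel⟩ := move_snd_rev hc hm hax hy
    have hbne : b ≠ p2 := by
      intro he
      subst he
      have hBB : wl2Eq B.Adj B.Adj (x, y) (x, q2) :=
        fun n => ((hrel n).symm).trans (hax n)
      have hd : wl2Eq B.Adj B.Adj (y, y) (q2, q2) := diag_snd hBB
      rcases hmady with h2 | h2
      · exact clash hm (Or.inr h2) (fun n => (hd n).symm)
      · exact clash hm (Or.inl h2) (fun n => (hd n).symm)
    have hbfib := (contractSetoid_mk_eq hc hm).mp hbp2
    rcases hbfib with h' | hmad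
    · exact absurd h' hbne
    have hmateq : mate G c G p2 = b := by
      apply mate_eq hm
      rcases hmad with h2 | h2
      · exact Or.inr h2
      · exact Or.inl h2
    have hymate : mate G c B q2 = y := by
      apply mate_eq hm
      rcases hmady with h2 | h2
      · exact Or.inr h2
      · exact Or.inl h2
    have e1 : eMapR G c B p2 q2 y = b := by simp [eMapR, hyq, hmateq]
    have e2 : eMap G c B p2 q2 b = y := by simp [eMap, hbne, hymate]
    rw [e1, e2]
    exact ⟨hbp2, hrel, rfl⟩

end Mates

section Transfer

variable {V W : Type} [Fintype V] [Fintype W] {G : SimpleGraph V} {c : V × V} {B : SimpleGraph W}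

theorem eMap_fst (hc : EdgeColor G c) (hm : DefinesMatching G c) {p1 p2 : V} {q1 q2 : W}
    (h : wl2Eq G.Adj B.Adj (p1, p2) (q1, q2)) {a : V}
    (ha : Quotient.mk (contractSetoid G c) a = Quotient.mk (contractSetoid G c) p1) :
    Quotient.mk (ctSetoid G c B) (eMap G c B p1 q1 a) = Quotient.mk (ctSetoid G c B) q1 ∧
    wl2Eq G.Adj B.Adj (a, p2) (eMap G c B p1 q1 a, q2) ∧
    eMapR G c B p1 q1 (eMap G c B p1 q1 a) = a := by
  obtain ⟨h1, h2, h3⟩ := eMap_snd hc hm (transpose h) ha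
  exact ⟨h1, transpose h2, h3⟩

theorem eMap_fst_rev (hc : EdgeColor G c) (hm : DefinesMatching G c) {p1 p2 : V} {q1 q2 : W}
    (h : wl2Eq G.Adj B.Adj (p1, p2) (q1, q2)) {x : W}
    (hx : Quotient.mk (ctSetoid G c B) x = Quotient.mk (ctSetoid G c B) q1) :
    Quotient.mk (contractSetoid G c) (eMapR G c B p1 q1 x) = Quotient.mk (contractSetoid G c) p1 ∧
    wl2Eq G.Adj B.Adj (eMapR G c B p1 q1 x, p2) (x, q2) ∧
    eMap G c B p1 q1 (eMapR G c B p1 q1 x) = x := by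
  obtain ⟨h1, h2, h3⟩ := eMap_snd_rev hc hm (transpose h) hx
  exact ⟨h1, transpose h2, h3⟩

theorem mk_transfer (hc : EdgeColor G c) (hm : DefinesMatching G c) {p1 p2 : V} {q1 q2 : W}
    (h : wl2Eq G.Adj B.Adj (p1, p2) (q1, q2)) :
    (Quotient.mk (contractSetoid G c) p1 = Quotient.mk (contractSetoid G c) p2) ↔
    (Quotient.mk (ctSetoid G c B) q1 = Quotient.mk (ctSetoid G c B) q2) := by
  rw [contractSetoid_mk_eq hc hm, ctSetoid_mk_eq hc hm]
  have ht := transpose h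
  have e1 : p1 = p2 ↔ q1 = q2 := eqC_eq_iff h
  have e2 : crel G c G p1 p2 ↔ crel G c B q1 q2 :=
    ⟨fun hr n => (hr n).trans (h n), fun hr n => (hr n).trans ((h n).symm)⟩
  have e3 : crel G c G p2 p1 ↔ crel G c B q2 q1 :=
    ⟨fun hr n => (hr n).trans (ht n), fun hr n => (hr n).trans ((ht n).symm)⟩
  rw [e1, e2, e3]

theorem contractGraph_adj_iff {X Y : Quotient (contractSetoid G c)} :
    (contractGraph G c).Adj X Y ↔ X ≠ Y ∧
      ∃ v w : V, Quotient.mk (contractSetoid G c) v = X ∧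
        Quotient.mk (contractSetoid G c) w = Y ∧ G.Adj v w := by
  rw [contractGraph, SimpleGraph.fromRel_adj]
  constructor
  · rintro ⟨hne, ⟨v, w, hv, hw, hadj⟩ | ⟨v, w, hv, hw, hadj⟩⟩
    · exact ⟨hne, v, w, hv, hw, hadj⟩
    · exact ⟨hne, w, v, hw, hv, hadj.symm⟩
  · rintro ⟨hne, v, w, hv, hw, hadj⟩
    exact ⟨hne, Or.inl ⟨v, w, hv, hw, hadj⟩⟩

theorem ctGraph_adj_iff {X Y : Quotient (ctSetoid G c B)} :
    (ctGraph G c B).Adj X Y ↔ X ≠ Y ∧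
      ∃ x y : W, Quotient.mk (ctSetoid G c B) x = X ∧
        Quotient.mk (ctSetoid G c B) y = Y ∧ B.Adj x y := by
  rw [ctGraph, SimpleGraph.fromRel_adj]
  constructor
  · rintro ⟨hne, ⟨v, w, hv, hw, hadj⟩ | ⟨v, w, hv, hw, hadj⟩⟩
    · exact ⟨hne, v, w, hv, hw, hadj⟩
    · exact ⟨hne, w, v, hw, hv, hadj.symm⟩
  · rintro ⟨hne, v, w, hv, hw, hadj⟩
    exact ⟨hne, Or.inl ⟨v, w, hv, hw, hadj⟩⟩

theorem adj_transfer (hc : EdgeColor G c) (hm : DefinesMatching G c) {p1 p2 : V} {q1 q2 : W}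
    (h : wl2Eq G.Adj B.Adj (p1, p2) (q1, q2)) :
    (contractGraph G c).Adj (Quotient.mk (contractSetoid G c) p1)
        (Quotient.mk (contractSetoid G c) p2) ↔
    (ctGraph G c B).Adj (Quotient.mk (ctSetoid G c B) q1) (Quotient.mk (ctSetoid G c B) q2) := by
  rw [contractGraph_adj_iff, ctGraph_adj_iff]
  constructor
  · rintro ⟨hne, v, w, hv, hw, hadj⟩
    refine ⟨fun he => hne ((mk_transfer hc hm h).mpr he), ?_⟩
    obtain ⟨hx1, hx2, -⟩ := eMap_fst hc hm h hv
    obtain ⟨hy1, hy2, -⟩ := eMap_snd hc hm hx2 hw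
    exact ⟨_, _, hx1, hy1, (eqC_adj_iff hy2).mp hadj⟩
  · rintro ⟨hne, x, y, hx, hy, hadj⟩
    refine ⟨fun he => hne ((mk_transfer hc hm h).mp he), ?_⟩
    obtain ⟨ha1, ha2, -⟩ := eMap_fst_rev hc hm h hx
    obtain ⟨hb1, hb2, -⟩ := eMap_snd_rev hc hm ha2 hy
    exact ⟨_, _, ha1, hb1, (eqC_adj_iff hb2).mpr hadj⟩

end Transfer

section Count

variable {α β : Type} [Fintype α] [Fintype β]

open Classical in
noncomputable def qsize (st : Setoid α) (X : Quotient st) : ℕ :=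
  (Finset.univ.filter fun y => Quotient.mk st y = X).card

/-- instance-free cardinality of a predicate. -/
noncomputable def fcard {γ : Type} (p : γ → Prop) : ℕ := Nat.card {a : γ // p a}

theorem fcard_congr {γ : Type} {p q : γ → Prop} (h : ∀ a, p a ↔ q a) : fcard p = fcard q :=
  Nat.card_congr (Equiv.subtypeEquivRight h)

theorem fcard_filter (p : α → Prop) (d : DecidablePred p) :
    fcard p = (@Finset.filter _ p d Finset.univ).card := by
  letI := d
  rw [fcard, Nat.card_eq_fintype_card, Fintype.card_subtype]

theorem fcard_equiv (σ : α ≃ β) {P : α → Prop} {P' : β → Prop}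
    (h : ∀ a, P a ↔ P' (σ a)) : fcard P = fcard P' :=
  Nat.card_congr (σ.subtypeEquiv h)

open Classical in
theorem fiber_count (st : Setoid α) (Q : Quotient st → Prop) (s : ℕ) :
    fcard (fun y : α => Q (Quotient.mk st y) ∧ qsize st (Quotient.mk st y) = s)
      = s * fcard (fun X : Quotient st => Q X ∧ qsize st X = s) := by
  classical
  rw [fcard_filter (fun y : α => Q (Quotient.mk st y) ∧ qsize st (Quotient.mk st y) = s)
      inferInstance,
    fcard_filter (fun X : Quotient st => Q X ∧ qsize st X = s) inferInstance]
  have hmem : ∀ y ∈ Finset.univ.filter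
        (fun y : α => Q (Quotient.mk st y) ∧ qsize st (Quotient.mk st y) = s),
      Quotient.mk st y ∈ Finset.univ.filter (fun X : Quotient st => Q X ∧ qsize st X = s) := by
    intro y hy
    simp only [Finset.mem_filter] at hy ⊢
    exact ⟨Finset.mem_univ _, hy.2⟩
  rw [Finset.card_eq_sum_card_fiberwise hmem]
  have hsummand : ∀ X ∈ Finset.univ.filter (fun X : Quotient st => Q X ∧ qsize st X = s),
      ((Finset.univ.filter
        (fun y : α => Q (Quotient.mk st y) ∧ qsize st (Quotient.mk st y) = s)).filter
          (fun y => Quotient.mk st y = X)).card = s := by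
    intro X hX
    simp only [Finset.mem_filter] at hX
    have heq : (Finset.univ.filter
          (fun y : α => Q (Quotient.mk st y) ∧ qsize st (Quotient.mk st y) = s)).filter
            (fun y => Quotient.mk st y = X)
        = Finset.univ.filter (fun y => Quotient.mk st y = X) := by
      ext y
      simp only [Finset.mem_filter, Finset.mem_univ, true_and]
      constructor
      · rintro ⟨-, h2⟩
        exact h2
      · intro h2
        refine ⟨⟨?_, ?_⟩, h2⟩
        · rw [h2]; exact hX.2.1
        · rw [h2]; exact hX.2.2
    rw [heq]
    have hq : qsize st X = (Finset.univ.filter (fun y => Quotient.mk st y = X)).card := by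
      rw [qsize]
    rw [← hq]
    exact hX.2.2
  rw [Finset.sum_congr rfl hsummand, Finset.sum_const, smul_eq_mul, mul_comm]

open Classical in
theorem qsize_split (st : Setoid α) (Q : Quotient st → Prop)
    (hsz : ∀ X : Quotient st, qsize st X = 1 ∨ qsize st X = 2) :
    2 * fcard Q =
      2 * fcard (fun y : α => Q (Quotient.mk st y) ∧ qsize st (Quotient.mk st y) = 1)
        + fcard (fun y : α => Q (Quotient.mk st y) ∧ qsize st (Quotient.mk st y) = 2) := by
  classical
  rw [fiber_count st Q 1, fiber_count st Q 2]
  rw [fcard_filter Q inferInstance,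
    fcard_filter (fun X : Quotient st => Q X ∧ qsize st X = 1) inferInstance,
    fcard_filter (fun X : Quotient st => Q X ∧ qsize st X = 2) inferInstance]
  have hsplit : (Finset.univ.filter Q) =
      (Finset.univ.filter fun X : Quotient st => Q X ∧ qsize st X = 1)
        ∪ (Finset.univ.filter fun X : Quotient st => Q X ∧ qsize st X = 2) := by
    ext X
    simp only [Finset.mem_filter, Finset.mem_univ, true_and, Finset.mem_union]
    constructor
    · intro hQ
      rcases hsz X with h | h
      · exact Or.inl ⟨hQ, h⟩
      · exact Or.inr ⟨hQ, h⟩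
    · rintro (⟨hQ, -⟩ | ⟨hQ, -⟩) <;> exact hQ
  have hdisj : Disjoint
      (Finset.univ.filter fun X : Quotient st => Q X ∧ qsize st X = 1)
      (Finset.univ.filter fun X : Quotient st => Q X ∧ qsize st X = 2) := by
    rw [Finset.disjoint_left]
    intro X h1 h2
    simp only [Finset.mem_filter] at h1 h2
    omega
  have hcard := congrArg Finset.card hsplit
  rw [Finset.card_union_of_disjoint hdisj] at hcard
  omega

theorem quot_count_transfer (st : Setoid α) (st' : Setoid β)
    (Q : Quotient st → Prop) (Q' : Quotient st' → Prop)
    (hsz : ∀ X : Quotient st, qsize st X = 1 ∨ qsize st X = 2)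
    (hsz' : ∀ X : Quotient st', qsize st' X = 1 ∨ qsize st' X = 2)
    (h1 : fcard (fun y : α => Q (Quotient.mk st y) ∧ qsize st (Quotient.mk st y) = 1)
        = fcard (fun y : β => Q' (Quotient.mk st' y) ∧ qsize st' (Quotient.mk st' y) = 1))
    (h2 : fcard (fun y : α => Q (Quotient.mk st y) ∧ qsize st (Quotient.mk st y) = 2)
        = fcard (fun y : β => Q' (Quotient.mk st' y) ∧ qsize st' (Quotient.mk st' y) = 2)) :
    fcard Q = fcard Q' := by
  have e1 := qsize_split st Q hsz
  have e2 := qsize_split st' Q' hsz'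
  omega

theorem count_map_fcard {γ : Type} [DecidableEq γ] (F : α → γ) (t : γ) :
    Multiset.count t (Multiset.map F Finset.univ.val) = fcard (fun a : α => t = F a) := by
  rw [Multiset.count_map]
  exact (fcard_filter _ _).symm

end Count

section Fibers

variable {V W : Type} [Fintype V] [Fintype W] {G : SimpleGraph V} {c : V × V} {B : SimpleGraph W}

open Classical in
theorem fibB_matched (hc : EdgeColor G c) (hm : DefinesMatching G c) {x : W}
    (h : matchedB G c B x) :
    (Finset.univ.filter fun y => Quotient.mk (ctSetoid G c B) y = Quotient.mk (ctSetoid G c B) x)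
      = {x, mate G c B x} := by
  ext y
  simp only [Finset.mem_filter, Finset.mem_univ, true_and, Finset.mem_insert,
    Finset.mem_singleton]
  rw [ctSetoid_mk_eq hc hm]
  constructor
  · rintro (rfl | h2 | h2)
    · exact Or.inl rfl
    · exact Or.inr (mate_eq hm (Or.inr h2)).symm
    · exact Or.inr (mate_eq hm (Or.inl h2)).symm
  · rintro (rfl | rfl)
    · exact Or.inl rfl
    · rcases mate_spec h with h2 | h2
      · exact Or.inr (Or.inr h2)
      · exact Or.inr (Or.inl h2)

open Classical in
theorem fibB_single (hc : EdgeColor G c) (hm : DefinesMatching G c) {x : W}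
    (h : ¬ matchedB G c B x) :
    (Finset.univ.filter fun y => Quotient.mk (ctSetoid G c B) y = Quotient.mk (ctSetoid G c B) x)
      = {x} := by
  ext y
  simp only [Finset.mem_filter, Finset.mem_univ, true_and, Finset.mem_singleton]
  rw [ctSetoid_mk_eq hc hm]
  constructor
  · rintro (rfl | h2 | h2)
    · rfl
    · exact absurd ⟨y, Or.inr h2⟩ h
    · exact absurd ⟨y, Or.inl h2⟩ h
  · rintro rfl; exact Or.inl rfl

theorem qsizeB_matched (hc : EdgeColor G c) (hm : DefinesMatching G c) {x : W}
    (h : matchedB G c B x) :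
    qsize (ctSetoid G c B) (Quotient.mk (ctSetoid G c B) x) = 2 := by
  classical
  rw [qsize]
  rw [show (Finset.univ.filter fun y =>
      Quotient.mk (ctSetoid G c B) y = Quotient.mk (ctSetoid G c B) x) = {x, mate G c B x}
    from fibB_matched hc hm h]
  exact Finset.card_pair (mate_ne hc h).symm

theorem qsizeB_single (hc : EdgeColor G c) (hm : DefinesMatching G c) {x : W}
    (h : ¬ matchedB G c B x) :
    qsize (ctSetoid G c B) (Quotient.mk (ctSetoid G c B) x) = 1 := by
  classical
  rw [qsize]
  rw [show (Finset.univ.filter fun y =>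
      Quotient.mk (ctSetoid G c B) y = Quotient.mk (ctSetoid G c B) x) = {x}
    from fibB_single hc hm h]
  exact Finset.card_singleton x

theorem qsizeB_or (hc : EdgeColor G c) (hm : DefinesMatching G c) :
    ∀ X : Quotient (ctSetoid G c B), qsize (ctSetoid G c B) X = 1 ∨ qsize (ctSetoid G c B) X = 2 := by
  intro X
  induction X using Quotient.ind with
  | _ x =>
    by_cases h : matchedB G c B x
    · exact Or.inr (qsizeB_matched hc hm h)
    · exact Or.inl (qsizeB_single hc hm h)

theorem qsizeB_two_iff (hc : EdgeColor G c) (hm : DefinesMatching G c) {x : W} :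
    qsize (ctSetoid G c B) (Quotient.mk (ctSetoid G c B) x) = 2 ↔ matchedB G c B x := by
  by_cases h : matchedB G c B x
  · exact ⟨fun _ => h, fun _ => qsizeB_matched hc hm h⟩
  · rw [qsizeB_single hc hm h]
    exact ⟨fun h1 => by omega, fun h2 => absurd h2 h⟩

end Fibers

section FibersG

variable {V : Type} [Fintype V] {G : SimpleGraph V} {c : V × V}

open Classical in
theorem fibG_matched (hc : EdgeColor G c) (hm : DefinesMatching G c) {x : V}
    (h : matchedB G c G x) :
    (Finset.univ.filter fun y =>
        Quotient.mk (contractSetoid G c) y = Quotient.mk (contractSetoid G c) x)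
      = {x, mate G c G x} := by
  ext y
  simp only [Finset.mem_filter, Finset.mem_univ, true_and, Finset.mem_insert,
    Finset.mem_singleton]
  rw [contractSetoid_mk_eq hc hm]
  constructor
  · rintro (rfl | h2 | h2)
    · exact Or.inl rfl
    · exact Or.inr (mate_eq hm (Or.inr h2)).symm
    · exact Or.inr (mate_eq hm (Or.inl h2)).symm
  · rintro (rfl | rfl)
    · exact Or.inl rfl
    · rcases mate_spec h with h2 | h2
      · exact Or.inr (Or.inr h2)
      · exact Or.inr (Or.inl h2)

open Classical in
theorem fibG_single (hc : EdgeColor G c) (hm : DefinesMatching G c) {x : V}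
    (h : ¬ matchedB G c G x) :
    (Finset.univ.filter fun y =>
        Quotient.mk (contractSetoid G c) y = Quotient.mk (contractSetoid G c) x)
      = {x} := by
  ext y
  simp only [Finset.mem_filter, Finset.mem_univ, true_and, Finset.mem_singleton]
  rw [contractSetoid_mk_eq hc hm]
  constructor
  · rintro (rfl | h2 | h2)
    · rfl
    · exact absurd ⟨y, Or.inr h2⟩ h
    · exact absurd ⟨y, Or.inl h2⟩ h
  · rintro rfl; exact Or.inl rfl

theorem qsizeG_matched (hc : EdgeColor G c) (hm : DefinesMatching G c) {x : V}
    (h : matchedB G c G x) :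
    qsize (contractSetoid G c) (Quotient.mk (contractSetoid G c) x) = 2 := by
  classical
  rw [qsize]
  rw [show (Finset.univ.filter fun y =>
      Quotient.mk (contractSetoid G c) y = Quotient.mk (contractSetoid G c) x) = {x, mate G c G x}
    from fibG_matched hc hm h]
  exact Finset.card_pair (mate_ne hc h).symm

theorem qsizeG_single (hc : EdgeColor G c) (hm : DefinesMatching G c) {x : V}
    (h : ¬ matchedB G c G x) :
    qsize (contractSetoid G c) (Quotient.mk (contractSetoid G c) x) = 1 := by
  classical
  rw [qsize]
  rw [show (Finset.univ.filter fun y =>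
      Quotient.mk (contractSetoid G c) y = Quotient.mk (contractSetoid G c) x) = {x}
    from fibG_single hc hm h]
  exact Finset.card_singleton x

theorem qsizeG_or (hc : EdgeColor G c) (hm : DefinesMatching G c) :
    ∀ X : Quotient (contractSetoid G c),
      qsize (contractSetoid G c) X = 1 ∨ qsize (contractSetoid G c) X = 2 := by
  intro X
  induction X using Quotient.ind with
  | _ x =>
    by_cases h : matchedB G c G x
    · exact Or.inr (qsizeG_matched hc hm h)
    · exact Or.inl (qsizeG_single hc hm h)

theorem qsizeG_two_iff (hc : EdgeColor G c) (hm : DefinesMatching G c) {x : V} :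
    qsize (contractSetoid G c) (Quotient.mk (contractSetoid G c) x) = 2 ↔ matchedB G c G x := by
  by_cases h : matchedB G c G x
  · exact ⟨fun _ => h, fun _ => qsizeG_matched hc hm h⟩
  · rw [qsizeG_single hc hm h]
    exact ⟨fun h1 => by omega, fun h2 => absurd h2 h⟩

end FibersG

section Kappa

variable {V W : Type} [Fintype V] [Fintype W] {G : SimpleGraph V} {c : V × V} {B : SimpleGraph W}

open Classical in
theorem kappa_transfer (hc : EdgeColor G c) (hm : DefinesMatching G c)
    {p1 p2 : V} {q1 q2 : W} (h : wl2Eq G.Adj B.Adj (p1, p2) (q1, q2)) :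
    contractColor G c (Quotient.mk (contractSetoid G c) p1) (Quotient.mk (contractSetoid G c) p2)
      = κB G c B (Quotient.mk (ctSetoid G c B) q1) (Quotient.mk (ctSetoid G c B) q2) := by
  classical
  rw [contractColor, κB]
  apply Multiset.ext.mpr
  intro γ
  rw [Multiset.count_map, Multiset.count_map, Multiset.filter_filter, Multiset.filter_filter]
  have key : (Finset.univ.filter (fun r : V × V => γ = Quotient.mk (wl2Setoid G.Adj) r ∧
        (Quotient.mk (contractSetoid G c) r.1 = Quotient.mk (contractSetoid G c) p1 ∧
         Quotient.mk (contractSetoid G c) r.2 = Quotient.mk (contractSetoid G c) p2))).card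
      = (Finset.univ.filter (fun s : W × W => γ = gB G B c s ∧
        (Quotient.mk (ctSetoid G c B) s.1 = Quotient.mk (ctSetoid G c B) q1 ∧
         Quotient.mk (ctSetoid G c B) s.2 = Quotient.mk (ctSetoid G c B) q2))).card := by
    refine Finset.card_bij' (fun r _ => (eMap G c B p1 q1 r.1, eMap G c B p2 q2 r.2))
      (fun s _ => (eMapR G c B p1 q1 s.1, eMapR G c B p2 q2 s.2)) ?_ ?_ ?_ ?_
    · intro r hr
      rw [Finset.mem_filter] at hr ⊢
      obtain ⟨-, hγ, h1, h2⟩ := hr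
      obtain ⟨hx1, hx2, -⟩ := eMap_fst hc hm h h1
      obtain ⟨hy1, hy2, -⟩ := eMap_snd hc hm hx2 h2
      refine ⟨Finset.mem_univ _, ?_, hx1, hy1⟩
      show γ = gB G B c (eMap G c B p1 q1 r.1, eMap G c B p2 q2 r.2)
      rw [hγ, gB_eq_of c hy2, Prod.mk.eta]
    · intro s hs
      rw [Finset.mem_filter] at hs ⊢
      obtain ⟨-, hγ, h1, h2⟩ := hs
      obtain ⟨ha1, ha2, -⟩ := eMap_fst_rev hc hm h h1
      obtain ⟨hb1, hb2, -⟩ := eMap_snd_rev hc hm ha2 h2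
      refine ⟨Finset.mem_univ _, ?_, ha1, hb1⟩
      show γ = Quotient.mk (wl2Setoid G.Adj) (eMapR G c B p1 q1 s.1, eMapR G c B p2 q2 s.2)
      rw [hγ]
      conv_lhs => rw [show s = (s.1, s.2) from (Prod.mk.eta).symm]
      exact gB_eq_of c hb2
    · intro r hr
      rw [Finset.mem_filter] at hr
      obtain ⟨-, -, h1, h2⟩ := hr
      obtain ⟨-, hx2, e1⟩ := eMap_fst hc hm h h1
      obtain ⟨-, -, e2⟩ := eMap_snd hc hm hx2 h2
      show (eMapR G c B p1 q1 (eMap G c B p1 q1 r.1),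
        eMapR G c B p2 q2 (eMap G c B p2 q2 r.2)) = r
      rw [e1, e2]
    · intro s hs
      rw [Finset.mem_filter] at hs
      obtain ⟨-, -, h1, h2⟩ := hs
      obtain ⟨-, ha2, e1⟩ := eMap_fst_rev hc hm h h1
      obtain ⟨-, -, e2⟩ := eMap_snd_rev hc hm ha2 h2
      show (eMap G c B p1 q1 (eMapR G c B p1 q1 s.1),
        eMap G c B p2 q2 (eMapR G c B p2 q2 s.2)) = s
      rw [e1, e2]
  exact key

end Kappa

section Simulation

variable {V W : Type} [Fintype V] [Fintype W] {G : SimpleGraph V} {c : V × V} {B : SimpleGraph W}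

open Classical in
theorem arc_transfer (hc : EdgeColor G c) (hm : DefinesMatching G c)
    {p1 p2 : V} {q1 q2 : W} (h : wl2Eq G.Adj B.Adj (p1, p2) (q1, q2)) :
    arcColor (contractGraph G c).Adj (contractColor G c)
        (Quotient.mk (contractSetoid G c) p1) (Quotient.mk (contractSetoid G c) p2)
      = arcColor (ctGraph G c B).Adj (κB G c B)
        (Quotient.mk (ctSetoid G c B) q1) (Quotient.mk (ctSetoid G c B) q2) := by
  rw [arcColor, arcColor]
  have hiff : (Quotient.mk (contractSetoid G c) p1 = Quotient.mk (contractSetoid G c) p2 ∨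
      (contractGraph G c).Adj (Quotient.mk (contractSetoid G c) p1)
        (Quotient.mk (contractSetoid G c) p2)) ↔
      (Quotient.mk (ctSetoid G c B) q1 = Quotient.mk (ctSetoid G c B) q2 ∨
      (ctGraph G c B).Adj (Quotient.mk (ctSetoid G c B) q1)
        (Quotient.mk (ctSetoid G c B) q2)) :=
    or_congr (mk_transfer hc hm h) (adj_transfer hc hm h)
  by_cases hcond : Quotient.mk (contractSetoid G c) p1 = Quotient.mk (contractSetoid G c) p2 ∨
      (contractGraph G c).Adj (Quotient.mk (contractSetoid G c) p1)
        (Quotient.mk (contractSetoid G c) p2)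
  · rw [if_pos hcond, if_pos (hiff.mp hcond), kappa_transfer hc hm h]
  · rw [if_neg hcond, if_neg (fun hh => hcond (hiff.mpr hh))]

theorem simulation (hc : EdgeColor G c) (hm : DefinesMatching G c) :
    ∀ (n : ℕ) (p1 p2 : V) (q1 q2 : W), wl2Eq G.Adj B.Adj (p1, p2) (q1, q2) →
      wlRound (contractGraph G c).Adj (arcColor (contractGraph G c).Adj (contractColor G c)) n
        (Quotient.mk (contractSetoid G c) p1, Quotient.mk (contractSetoid G c) p2)
      = wlRound (ctGraph G c B).Adj (arcColor (ctGraph G c B).Adj (κB G c B)) n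
        (Quotient.mk (ctSetoid G c B) q1, Quotient.mk (ctSetoid G c B) q2) := by
  intro n
  induction n with
  | zero =>
    intro p1 p2 q1 q2 h
    have e1 := propext (mk_transfer hc hm (B := B) h)
    have e2 := propext (adj_transfer hc hm (B := B) h)
    have e3 := propext (adj_transfer hc hm (B := B) (transpose h))
    have e4 := arc_transfer hc hm h
    exact congrArg₂ Prod.mk e1 (congrArg₂ Prod.mk e2 (congrArg₂ Prod.mk e3 e4))
  | succ n ih =>
    intro p1 p2 q1 q2 h
    obtain ⟨σ, hσ⟩ := rowcol (h : wl2EqC G.Adj _ B.Adj _ (p1, p2) (q1, q2))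
    refine congrArg₂ Prod.mk (ih p1 p2 q1 q2 h) ?_
    classical
    apply Multiset.ext.mpr
    intro t
    rw [count_map_fcard, count_map_fcard]
    have hvs : ∀ s : ℕ,
        fcard (fun u : V =>
          (t = (wlRound (contractGraph G c).Adj
                  (arcColor (contractGraph G c).Adj (contractColor G c)) n
                  (Quotient.mk (contractSetoid G c) u, Quotient.mk (contractSetoid G c) p2),
                wlRound (contractGraph G c).Adj
                  (arcColor (contractGraph G c).Adj (contractColor G c)) n
                  (Quotient.mk (contractSetoid G c) p1, Quotient.mk (contractSetoid G c) u)))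
          ∧ qsize (contractSetoid G c) (Quotient.mk (contractSetoid G c) u) = s)
      = fcard (fun w : W =>
          (t = (wlRound (ctGraph G c B).Adj (arcColor (ctGraph G c B).Adj (κB G c B)) n
                  (Quotient.mk (ctSetoid G c B) w, Quotient.mk (ctSetoid G c B) q2),
                wlRound (ctGraph G c B).Adj (arcColor (ctGraph G c B).Adj (κB G c B)) n
                  (Quotient.mk (ctSetoid G c B) q1, Quotient.mk (ctSetoid G c B) w)))
          ∧ qsize (ctSetoid G c B) (Quotient.mk (ctSetoid G c B) w) = s) := by
      intro s
      apply fcard_equiv σ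
      intro u
      have hrow := (hσ u).1
      have hcol := (hσ u).2
      have hFst := ih u p2 (σ u) q2 hrow
      have hSnd := ih p1 u q1 (σ u) hcol
      have hq : qsize (contractSetoid G c) (Quotient.mk (contractSetoid G c) u)
          = qsize (ctSetoid G c B) (Quotient.mk (ctSetoid G c B) (σ u)) := by
        by_cases hmu : matchedB G c G u
        · rw [qsizeG_matched hc hm hmu,
            qsizeB_matched hc hm ((matched_transfer (diag_fst hrow)).mp hmu)]
        · rw [qsizeG_single hc hm hmu,
            qsizeB_single hc hm (fun hh => hmu ((matched_transfer (diag_fst hrow)).mpr hh))]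
      rw [hFst, hSnd, hq]
    exact quot_count_transfer (contractSetoid G c) (ctSetoid G c B)
      (fun X => t = (wlRound (contractGraph G c).Adj
          (arcColor (contractGraph G c).Adj (contractColor G c)) n
          (X, Quotient.mk (contractSetoid G c) p2),
        wlRound (contractGraph G c).Adj
          (arcColor (contractGraph G c).Adj (contractColor G c)) n
          (Quotient.mk (contractSetoid G c) p1, X)))
      (fun Y => t = (wlRound (ctGraph G c B).Adj (arcColor (ctGraph G c B).Adj (κB G c B)) n
          (Y, Quotient.mk (ctSetoid G c B) q2),
        wlRound (ctGraph G c B).Adj (arcColor (ctGraph G c B).Adj (κB G c B)) n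
          (Quotient.mk (ctSetoid G c B) q1, Y)))
      (qsizeG_or hc hm) (qsizeB_or hc hm) (hvs 1) (hvs 2)

end Simulation

section Assembly

variable {V W : Type} [Fintype V] [Fintype W] {G : SimpleGraph V} {c : V × V} {H : SimpleGraph W}

theorem total_cover {v₁ v₂ : V} {w₁ w₂ : W} (hseed : wl2Eq G.Adj H.Adj (v₁, v₂) (w₁, w₂)) :
    ∀ r : W × W, ∃ p : V × V, wl2Eq G.Adj H.Adj p r := by
  intro r
  obtain ⟨σ1, hσ1⟩ := rowcol (hseed : wl2EqC G.Adj _ H.Adj _ (v₁, v₂) (w₁, w₂))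
  have h1 := (hσ1 (σ1.symm r.1)).2
  rw [σ1.apply_symm_apply] at h1
  have h2 : wl2Eq G.Adj H.Adj (σ1.symm r.1, σ1.symm r.1) (r.1, r.1) := diag_snd h1
  obtain ⟨σ2, hσ2⟩ := rowcol (h2 : wl2EqC G.Adj _ H.Adj _ _ _)
  have h3 := (hσ2 (σ2.symm r.2)).2
  rw [σ2.apply_symm_apply] at h3
  exact ⟨(σ1.symm r.1, σ2.symm r.2), h3⟩

theorem pin (hc : EdgeColor G c) (hm : DefinesMatching G c) {x x' : W}
    (hcl : Quotient.mk (ctSetoid G c H) x = Quotient.mk (ctSetoid G c H) x')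
    (hvc : wl2Eq H.Adj H.Adj (x, x) (x', x')) : x = x' := by
  rcases (ctSetoid_mk_eq hc hm).mp hcl with h | h | h
  · exact h
  · exact absurd hvc (fun hvc => clash hm (Or.inl h) hvc)
  · exact absurd hvc (fun hvc => clash hm (Or.inr h) hvc)

theorem pinG (hc : EdgeColor G c) (hm : DefinesMatching G c) {x x' : V}
    (hcl : Quotient.mk (contractSetoid G c) x = Quotient.mk (contractSetoid G c) x')
    (hvc : wl2Eq G.Adj G.Adj (x, x) (x', x')) : x = x' := by
  rcases (contractSetoid_mk_eq hc hm).mp hcl with h | h | h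
  · exact h
  · exact absurd hvc (fun hvc => clash hm (Or.inl h) hvc)
  · exact absurd hvc (fun hvc => clash hm (Or.inr h) hvc)

theorem lift_iso (hc : EdgeColor G c) (hm : DefinesMatching G c) {v₁ v₂ : V} {w₁ w₂ : W}
    (hseed : wl2Eq G.Adj H.Adj (v₁, v₂) (w₁, w₂))
    (e : Quotient (contractSetoid G c) ≃ Quotient (ctSetoid G c H))
    (hadj : ∀ X Y, (contractGraph G c).Adj X Y ↔ (ctGraph G c H).Adj (e X) (e Y))
    (hκ : ∀ X Y, X = Y ∨ (contractGraph G c).Adj X Y →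
      contractColor G c X Y = κB G c H (e X) (e Y))
    (he1 : e (Quotient.mk (contractSetoid G c) v₁) = Quotient.mk (ctSetoid G c H) w₁)
    (he2 : e (Quotient.mk (contractSetoid G c) v₂) = Quotient.mk (ctSetoid G c H) w₂) :
    ∃ φ : G ≃g H, φ v₁ = w₁ ∧ φ v₂ = w₂ := by
  classical
  have hcov := total_cover hseed
  -- existence of a cross-equal pair over corresponding classes
  have pairEx : ∀ a b : V,
      (Quotient.mk (contractSetoid G c) a = Quotient.mk (contractSetoid G c) b ∨
        (contractGraph G c).Adj (Quotient.mk (contractSetoid G c) a)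
          (Quotient.mk (contractSetoid G c) b)) →
      ∃ r : W × W, Quotient.mk (ctSetoid G c H) r.1 = e (Quotient.mk (contractSetoid G c) a) ∧
        Quotient.mk (ctSetoid G c H) r.2 = e (Quotient.mk (contractSetoid G c) b) ∧
        wl2Eq G.Adj H.Adj (a, b) r := by
    intro a b harc
    have hmem : Quotient.mk (wl2Setoid G.Adj) (a, b) ∈
        contractColor G c (Quotient.mk (contractSetoid G c) a)
          (Quotient.mk (contractSetoid G c) b) := by
      rw [contractColor]
      apply Multiset.mem_map_of_mem
      rw [Multiset.mem_filter]
      exact ⟨Finset.mem_univ_val _, rfl, rfl⟩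
    rw [hκ _ _ harc, κB] at hmem
    obtain ⟨r, hrmem, hrg⟩ := Multiset.mem_map.mp hmem
    rw [Multiset.mem_filter] at hrmem
    exact ⟨r, hrmem.2.1, hrmem.2.2, wl2Eq_of_gB c (hcov r) hrg⟩
  -- the lifted map
  have phiEx : ∀ a : V, ∃ x : W,
      Quotient.mk (ctSetoid G c H) x = e (Quotient.mk (contractSetoid G c) a) ∧
      wl2Eq G.Adj H.Adj (a, a) (x, x) := by
    intro a
    obtain ⟨⟨x, y⟩, h1, h2, h3⟩ := pairEx a a (Or.inl rfl)
    have hxy : x = y := (eqC_eq_iff h3).mp rfl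
    subst hxy
    exact ⟨x, h1, h3⟩
  set φ0 : V → W := fun a => Classical.choose (phiEx a) with hφ0
  have hφ : ∀ a : V, Quotient.mk (ctSetoid G c H) (φ0 a) = e (Quotient.mk (contractSetoid G c) a)
      ∧ wl2Eq G.Adj H.Adj (a, a) (φ0 a, φ0 a) := fun a => Classical.choose_spec (phiEx a)
  -- adjacency preservation
  have hadj0 : ∀ a b : V, G.Adj a b ↔ H.Adj (φ0 a) (φ0 b) := by
    intro a b
    by_cases harc : Quotient.mk (contractSetoid G c) a = Quotient.mk (contractSetoid G c) b ∨
        (contractGraph G c).Adj (Quotient.mk (contractSetoid G c) a)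
          (Quotient.mk (contractSetoid G c) b)
    · obtain ⟨r, h1, h2, h3⟩ := pairEx a b harc
      have hr1 : r.1 = φ0 a := by
        refine pin (H := H) hc hm ?_ ?_
        · rw [h1, (hφ a).1]
        · exact fun n => ((diag_fst h3 n).symm).trans ((hφ a).2 n)
      have hr2 : r.2 = φ0 b := by
        refine pin (H := H) hc hm ?_ ?_
        · rw [h2, (hφ b).1]
        · exact fun n => ((diag_snd h3 n).symm).trans ((hφ b).2 n)
      have := eqC_adj_iff h3
      rwa [hr1, hr2] at this
    · push_neg at harc
      constructor
      · intro hab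
        exact absurd (contractGraph_adj_iff.mpr ⟨harc.1, a, b, rfl, rfl, hab⟩) harc.2
      · intro hab
        exfalso
        apply harc.2
        apply (hadj _ _).mpr
        apply ctGraph_adj_iff.mpr
        refine ⟨fun he => harc.1 (e.injective he), φ0 a, φ0 b, (hφ a).1, (hφ b).1, hab⟩
  -- injectivity
  have hinj : Function.Injective φ0 := by
    intro a b hab
    have hcl : Quotient.mk (contractSetoid G c) a = Quotient.mk (contractSetoid G c) b := by
      apply e.injective
      rw [← (hφ a).1, ← (hφ b).1, hab]
    apply pinG hc hm hcl
    exact fun n => ((hφ a).2 n).trans (by rw [hab]; exact ((hφ b).2 n).symm)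
  have hcard : Fintype.card V = Fintype.card W :=
    eqC_card ⟨(v₁, v₂), (w₁, w₂), hseed⟩
  have hbij : Function.Bijective φ0 :=
    (Fintype.bijective_iff_injective_and_card φ0).mpr ⟨hinj, hcard⟩
  have hend1 : φ0 v₁ = w₁ := by
    refine (pin (H := H) hc hm ?_ ?_).symm
    · rw [(hφ v₁).1, he1]
    · exact fun n => ((diag_fst hseed n).symm).trans ((hφ v₁).2 n)
  have hend2 : φ0 v₂ = w₂ := by
    refine (pin (H := H) hc hm ?_ ?_).symm
    · rw [(hφ v₂).1, he2]
    · exact fun n => ((diag_snd hseed n).symm).trans ((hφ v₂).2 n)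
  exact ⟨⟨Equiv.ofBijective φ0 hbij, fun {a b} => (hadj0 a b).symm⟩, hend1, hend2⟩

end Assembly

/-- Let `c` be an edge color of `WL²(G)` that defines a matching
and equip `G/c` with the arc coloring `λ = χ/c`.  If 2-WL determines arc orbits
(resp. pair orbits) of the arc-colored graph `(G/c, λ)`, then 2-WL determines arc
orbits (resp. pair orbits) of `G`. -/
theorem statement_16 {V : Type} [Fintype V] (G : SimpleGraph V)
    (c : V × V) (hc : EdgeColor G c) (hm : DefinesMatching G c) :
    (CDeterminesArcOrbits (contractGraph G c) (contractColor G c) →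
      DeterminesArcOrbits G) ∧
    (CDeterminesPairOrbits (contractGraph G c) (contractColor G c) →
      DeterminesPairOrbits G) := by
  constructor
  · intro hyp v₁ v₂ harc W _ H w₁ w₂ harc' hseed
    have harcq : Quotient.mk (contractSetoid G c) v₁ = Quotient.mk (contractSetoid G c) v₂ ∨
        (contractGraph G c).Adj (Quotient.mk (contractSetoid G c) v₁)
          (Quotient.mk (contractSetoid G c) v₂) := by
      rcases harc with rfl | hadj
      · exact Or.inl rfl
      · by_cases hq : Quotient.mk (contractSetoid G c) v₁ = Quotient.mk (contractSetoid G c) v₂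
        · exact Or.inl hq
        · exact Or.inr (contractGraph_adj_iff.mpr ⟨hq, v₁, v₂, rfl, rfl, hadj⟩)
    have harcq' : Quotient.mk (ctSetoid G c H) w₁ = Quotient.mk (ctSetoid G c H) w₂ ∨
        (ctGraph G c H).Adj (Quotient.mk (ctSetoid G c H) w₁)
          (Quotient.mk (ctSetoid G c H) w₂) := by
      rcases harc' with rfl | hadj
      · exact Or.inl rfl
      · by_cases hq : Quotient.mk (ctSetoid G c H) w₁ = Quotient.mk (ctSetoid G c H) w₂
        · exact Or.inl hq
        · exact Or.inr (ctGraph_adj_iff.mpr ⟨hq, w₁, w₂, rfl, rfl, hadj⟩)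
    obtain ⟨e, he_adj, he_κ, he1, he2⟩ :=
      hyp _ _ harcq _ (ctGraph G c H) (κB G c H) _ _ harcq'
        (fun n => simulation hc hm n v₁ v₂ w₁ w₂ hseed)
    exact lift_iso hc hm hseed e he_adj he_κ he1 he2
  · intro hyp v₁ v₂ W _ H w₁ w₂ hseed
    obtain ⟨e, he_adj, he_κ, he1, he2⟩ :=
      hyp _ _ _ (ctGraph G c H) (κB G c H) _ _
        (fun n => simulation hc hm n v₁ v₂ w₁ w₂ hseed)
    exact lift_iso hc hm hseed e he_adj he_κ he1 he2

end WL
end
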